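/- arXiv:1009.2734 — 10 statements merged into one kernel-verified Lean document; each statement's English description precedes it below -/
import Mathlib

section
/- The set M of all words over the alphabet {b₁, b₂} of the form b₁³ V b₂³, where V begins with b₂, ends with b₁, and contains neither b₁³ nor b₂³ as a subword, has the property that no element of M is a proper subword of another element of M. -/
/-- The two letters of the alphabet. -/
def b1 : Fin 2 := 0
def b2 : Fin 2 := 1

/-- The set `M` of words `b₁³ V b₂³` where `V` begins with `b₂`, ends with `b₁`,
and contains neither `b₁³` nor `b₂³` as a subword. -/
def Mset : Set (List (Fin 2)) :=
  {w | ∃ V : List (Fin 2), w = [b1, b1, b1] ++ V ++ [b2, b2, b2] ∧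
    V.head? = some b2 ∧ V.getLast? = some b1 ∧
    ¬ [b1, b1, b1] <:+: V ∧ ¬ [b2, b2, b2] <:+: V}

lemma step_aux {α} (xs ys : List α) (a : α)
    (h : xs <:+: ys ++ [a]) (hx : xs.getLast? ≠ some a) : xs <:+: ys := by
  obtain ⟨s, t, ht⟩ := h
  rcases List.eq_nil_or_concat t with rfl | ⟨t', c, rfl⟩
  · rcases List.eq_nil_or_concat xs with rfl | ⟨x', d, rfl⟩
    · exact List.nil_infix
    · exfalso
      apply hx
      have h2 : d = a := by
        have h3 := congrArg List.getLast? ht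
        simpa [List.getLast?_concat, ← List.append_assoc] using h3
      simp [List.getLast?_concat, h2]
  · have ht' : (s ++ xs ++ t') ++ [c] = ys ++ [a] := by
      simpa [List.append_assoc] using ht
    obtain ⟨h1, _⟩ := List.append_inj' ht' rfl
    exact ⟨s, t', h1⟩

lemma strip {x y : Fin 2} (hxy : x ≠ y) (W : List (Fin 2))
    (h : ¬ [x, x, x] <:+: W) : ¬ [x, x, x] <:+: W ++ [y, y, y] := by
  intro hc
  have e : W ++ [y, y, y] = ((W ++ [y]) ++ [y]) ++ [y] := by simp
  rw [e] at hc
  have hlast : [x, x, x].getLast? ≠ some y := by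
    simp [hxy]
  exact h (step_aux _ _ _ (step_aux _ _ _ (step_aux _ _ _ hc hlast) hlast) hlast)

lemma key {x y : Fin 2} (hxy : x ≠ y) (s u r : List (Fin 2))
    (heq : [x, x, x] ++ r = s ++ [x, x, x] ++ u)
    (hr : r.head? = some y) (hno : ¬ [x, x, x] <:+: r) : s = [] := by
  match s with
  | [] => rfl
  | [a] =>
    simp only [List.cons_append, List.nil_append, List.cons.injEq] at heq
    obtain ⟨-, -, -, rfl⟩ := heq
    simp at hr
    exact absurd hr hxy
  | [a, b] =>
    simp only [List.cons_append, List.nil_append, List.cons.injEq] at heq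
    obtain ⟨-, -, -, rfl⟩ := heq
    simp at hr
    exact absurd hr hxy
  | a :: b :: c :: s' =>
    simp only [List.cons_append, List.nil_append, List.cons.injEq] at heq
    obtain ⟨-, -, -, rfl⟩ := heq
    exact absurd ⟨s', u, rfl⟩ hno

/-- no element of `M` is a proper subword of another element of `M`. -/
theorem stmt3 (Y Z : List (Fin 2)) (hY : Y ∈ Mset) (hZ : Z ∈ Mset) (h : Y <:+: Z) :
    Y = Z := by
  obtain ⟨V, rfl, hVh, hVl, hV1, hV2⟩ := hY
  obtain ⟨W, rfl, hWh, hWl, hW1, hW2⟩ := hZ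
  have hb : b1 ≠ b2 := by decide
  obtain ⟨s, t, ht⟩ := h
  -- first: s = []
  have heq1 : [b1, b1, b1] ++ (W ++ [b2, b2, b2]) =
      s ++ [b1, b1, b1] ++ (V ++ [b2, b2, b2] ++ t) := by
    simpa [List.append_assoc] using ht.symm
  have hWne : W ≠ [] := by intro hn; simp [hn] at hWh
  have hrh : (W ++ [b2, b2, b2]).head? = some b2 := by
    rw [List.head?_append, hWh]; rfl
  have hs : s = [] := key hb s _ _ heq1 hrh (strip hb W hW1)
  subst hs
  simp only [List.nil_append] at heq1
  have heq2 : W ++ [b2, b2, b2] = V ++ [b2, b2, b2] ++ t :=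
    List.append_cancel_left heq1
  -- now reverse
  have heq3 : [b2, b2, b2] ++ W.reverse =
      t.reverse ++ [b2, b2, b2] ++ V.reverse := by
    have := congrArg List.reverse heq2
    simpa [List.reverse_append, List.append_assoc] using this
  have hrh2 : W.reverse.head? = some b1 := by
    rw [List.head?_reverse]; exact hWl
  have hno2 : ¬ [b2, b2, b2] <:+: W.reverse := by
    intro hc
    apply hW2
    have : ([b2, b2, b2] : List (Fin 2)).reverse <:+: W.reverse := by
      simpa using hc
    exact List.reverse_infix.mp this
  have htr : t.reverse = [] := key hb.symm t.reverse _ _ heq3 hrh2 hno2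
  have htn : t = [] := by simpa using congrArg List.reverse htr
  subst htn
  have : W = V := by
    have := heq2
    simp only [List.append_nil] at this
    exact List.append_cancel_right this
  rw [this]
end

section
/- Let M be the set of all words over {b₁, b₂} of the form b₁³ V b₂³ where V begins with b₂, ends with b₁, and contains neither b₁³ nor b₂³ as a subword. If Y, Z ∈ M and Y ≡ UV, Z ≡ WU for some words V, W and some nonempty word U, then U ≡ Y ≡ Z (i.e., V and W are empty). -/
/-- In `aaa ++ V ++ bbb` with `V` starting with `b ≠ a` and not containing `aaa`,
the only occurrence of `aaa` is at the front. -/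
lemma only_front (a b : Fin 2) (V W P : List (Fin 2)) (hab : a ≠ b)
    (hV : V.head? = some b) (hinf : ¬ [a,a,a] <:+: V)
    (heq : [a,a,a] ++ V ++ [b,b,b] = W ++ [a,a,a] ++ P) : W = [] := by
  obtain ⟨V', rfl⟩ : ∃ V', V = b :: V' := by
    cases V with
    | nil => simp at hV
    | cons v V' =>
      have : v = b := by simpa using hV
      exact ⟨V', by rw [this]⟩
  match W with
  | [] => rfl
  | [w] =>
    simp only [List.cons_append, List.nil_append, List.cons.injEq] at heq
    exact absurd heq.2.2.2.1.symm hab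
  | [w, x] =>
    simp only [List.cons_append, List.nil_append, List.cons.injEq] at heq
    exact absurd heq.2.2.2.1.symm hab
  | w :: x :: y :: W' =>
    exfalso
    simp only [List.cons_append, List.nil_append, List.cons.injEq] at heq
    obtain ⟨rfl, rfl, rfl, heq⟩ := heq
    -- heq : b :: V' ++ [b,b,b] = W' ++ ([a,a,a] ++ P)  (roughly)
    set V : List (Fin 2) := b :: V' with hVdef
    have heq' : V ++ [b,b,b] = W' ++ ([a,a,a] ++ P) := by
      simpa [hVdef, List.append_assoc] using heq
    have hlen : V.length + 3 = W'.length + (3 + P.length) := by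
      have := congrArg List.length heq'
      simp [List.length_append] at this
      omega
    by_cases hc : W'.length + 3 ≤ V.length
    · -- aaa occurs inside V
      apply hinf
      obtain ⟨k, hk⟩ : ∃ k, V.length = W'.length + 3 + k := ⟨V.length - (W'.length + 3), by omega⟩
      have htake : V = (W' ++ ([a,a,a] ++ P)).take V.length := by
        rw [← heq']
        exact (List.take_left' rfl).symm
      have : (W' ++ ([a,a,a] ++ P)).take V.length
          = W' ++ [a,a,a] ++ P.take k := by
        rw [hk]
        rw [show W'.length + 3 + k = W'.length + (3 + k) by ring, List.take_length_add_append]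
        rw [show (3 : ℕ) + k = ([a,a,a] : List (Fin 2)).length + k by simp]
        rw [List.take_length_add_append, List.append_assoc]
      refine ⟨W', P.take k, ?_⟩
      rw [← this, ← htake]
    · -- the occurrence of aaa overlaps the bbb suffix: index V.length is both b and a
      have h1 : (V ++ [b,b,b])[V.length]? = some b := by
        rw [List.getElem?_append_right (le_refl _)]
        simp
      have h2 : (W' ++ ([a,a,a] ++ P))[V.length]? = some a := by
        rw [List.getElem?_append_right (by omega)]
        have hlt : V.length - W'.length < 3 := by omega
        rw [List.getElem?_append_left (by simpa using hlt)]
        interval_cases h : (V.length - W'.length) <;> simp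
      rw [heq'] at h1
      rw [h1] at h2
      exact hab (Option.some.inj h2).symm

/-- if `Y, Z ∈ M`, `Y ≡ UV` and `Z ≡ WU` with `U` nonempty, then
`U ≡ Y ≡ Z` (so `V` and `W` are empty). -/
theorem stmt4 (Y Z U V W : List (Fin 2)) (hY : Y ∈ Mset) (hZ : Z ∈ Mset)
    (hU : U ≠ []) (h1 : Y = U ++ V) (h2 : Z = W ++ U) :
    U = Y ∧ U = Z := by
  obtain ⟨VY, hYeq, hYh, hYl, hY1, hY2⟩ := hY
  obtain ⟨VZ, hZeq, hZh, hZl, hZ1, hZ2⟩ := hZ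
  -- U ends with b2 since Z does
  have hUlast : U.getLast? = some b2 := by
    have : Z.getLast? = some b2 := by
      rw [hZeq]
      rw [List.getLast?_append_of_ne_nil _ (by simp)]
      rfl
    rw [h2, List.getLast?_append_of_ne_nil _ (by simpa using hU)] at this
    exact this
  have hYU : [b1,b1,b1] ++ VY ++ [b2,b2,b2] = U ++ V := by rw [← hYeq, h1]
  have hb12 : b1 ≠ b2 := by decide
  match U, hU with
  | [u], _ =>
    simp only [List.cons_append, List.nil_append, List.cons.injEq] at hYU
    rw [← hYU.1] at hUlast
    exact absurd hUlast (by decide)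
  | [u, v], _ =>
    simp only [List.cons_append, List.nil_append, List.cons.injEq] at hYU
    rw [← hYU.1, ← hYU.2.1] at hUlast
    exact absurd hUlast (by decide)
  | [u, v, w], _ =>
    simp only [List.cons_append, List.nil_append, List.cons.injEq] at hYU
    rw [← hYU.1, ← hYU.2.1, ← hYU.2.2.1] at hUlast
    exact absurd hUlast (by decide)
  | u :: v :: w :: x :: U', _ =>
    simp only [List.cons_append, List.nil_append, List.cons.injEq] at hYU
    obtain ⟨rfl, rfl, rfl, hYU⟩ := hYU
    -- Z = W ++ [b1,b1,b1] ++ (x :: U'); only front occurrence of b1³ ⇒ W = []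
    have hW : W = [] := by
      apply only_front b1 b2 VZ W (x :: U') hb12 hZh hZ1
      rw [← hZeq, h2]
      simp [List.append_assoc]
    subst hW
    simp only [List.nil_append] at h2
    -- now Z = U, so Y = Z ++ V; b2³ occurs only at the back of Y ⇒ V = []
    have hV : V = [] := by
      have hrev : [b2,b2,b2] ++ VY.reverse ++ [b1,b1,b1]
          = V.reverse ++ [b2,b2,b2] ++ (VZ.reverse ++ [b1,b1,b1]) := by
        have : Y.reverse = ((Z ++ V)).reverse := by rw [h1, ← h2]
        rw [hYeq, hZeq] at this
        simpa [List.reverse_append, List.append_assoc] using this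
      have hrh : VY.reverse.head? = some b1 := by
        rw [List.head?_reverse]; exact hYl
      have hri : ¬ [b2,b2,b2] <:+: VY.reverse := by
        intro h
        apply hY2
        have := List.reverse_infix.mp (by simpa using h.reverse)
        simpa using h.reverse
      have := only_front b2 b1 VY.reverse V.reverse
        ((VZ.reverse ++ [b1,b1,b1])) hb12.symm hrh hri (by
          simpa [List.append_assoc] using hrev)
      simpa using this
    subst hV
    rw [h1, h2]
    simp
end

section
/- Let M be a set of words over a finite alphabet satisfying the overlap property. Suppose X₁X₂⋯X_t ≡ S Y₁Y₂⋯Y_m T (letter-for-letter equality) where t, m ≥ 1, all X_n, Y_j ∈ M, and S, T are possibly empty words. Then there exists i ≤ t such that S ≡ X₁⋯X_{i−1}, T ≡ X_{i+m}⋯X_t, and Y_j ≡ X_{i+j−1} for j = 1, …, m. -/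
/-- A set of words satisfies the overlap property if (1) no element is a proper subword of
another and (2) whenever `Y ≡ UV` and `Z ≡ WU` with `U` nonempty, `Y ≡ U ≡ Z`. -/
def OverlapProp {α : Type*} (M : Set (List α)) : Prop :=
  (∀ Y ∈ M, ∀ Z ∈ M, Y <:+: Z → Y = Z) ∧
  (∀ Y ∈ M, ∀ Z ∈ M, ∀ U V W : List α, U ≠ [] → Y = U ++ V → Z = W ++ U →
    U = Y ∧ U = Z)

lemma flat_nil {α : Type*} {M : Set (List α)} (hne : [] ∉ M)
    {X : List (List α)} (hX : ∀ w ∈ X, w ∈ M) (h : X.flatten = []) : X = [] := by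
  cases X with
  | nil => rfl
  | cons a l =>
    exfalso
    simp only [List.flatten_cons, List.append_eq_nil_iff] at h
    exact hne (h.1 ▸ hX a (by simp))

lemma key_s6 {α : Type*} (M : Set (List α)) (hM : OverlapProp M) (hne : [] ∉ M)
    (YY : List α) (hYY : YY ∈ M) :
    ∀ (X : List (List α)), (∀ w ∈ X, w ∈ M) → ∀ S R : List α,
      X.flatten = S ++ YY ++ R →
      ∃ X₁ X₂, X = X₁ ++ YY :: X₂ ∧ S = X₁.flatten ∧ R = X₂.flatten := by
  have hYYne : YY ≠ [] := fun h => hne (h ▸ hYY)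
  intro X
  induction X with
  | nil =>
    intro _ S R h
    simp only [List.flatten_nil] at h
    have : YY = [] := by
      have := congrArg List.length h
      simp at this
      exact List.length_eq_zero_iff.mp (by omega)
    exact absurd this hYYne
  | cons A X' ih =>
    intro hX S R h
    have hA : A ∈ M := hX A (by simp)
    have hX' : ∀ w ∈ X', w ∈ M := fun w hw => hX w (by simp [hw])
    simp only [List.flatten_cons] at h
    have hAeq : A = (S ++ YY ++ R).take A.length := by
      rw [← h]; simp
    by_cases hc1 : A.length ≤ S.length
    · -- A is a prefix of S
      have hApre : A = S.take A.length := by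
        conv_lhs => rw [hAeq]
        rw [List.append_assoc, List.take_append_of_le_length hc1]
      have hS : S = A ++ S.drop A.length := by
        conv_lhs => rw [← List.take_append_drop A.length S, ← hApre]
      have h2 : A ++ X'.flatten = A ++ (S.drop A.length ++ (YY ++ R)) := by
        rw [h, hS]; simp [List.append_assoc]
      have h3 := List.append_cancel_left h2
      obtain ⟨X₁, X₂, hx, hs, hr⟩ := ih hX' (S.drop A.length) R
        (by rw [h3]; simp [List.append_assoc])
      exact ⟨A :: X₁, X₂, by simp [hx], by rw [hS, hs]; simp, hr⟩
    · push_neg at hc1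
      have htakeA : A = S ++ (YY ++ R).take (A.length - S.length) := by
        conv_lhs => rw [hAeq]
        rw [List.append_assoc, List.take_append,
          List.take_of_length_le (le_of_lt hc1)]
      by_cases hc2 : S.length + YY.length ≤ A.length
      · -- YY is an infix of A
        have hinf : YY <:+: A := by
          rw [htakeA, List.take_append,
            List.take_of_length_le (by omega)]
          exact ⟨S, R.take (A.length - S.length - YY.length), by simp [List.append_assoc]⟩
        have hYA : YY = A := hM.1 YY hYY A hA hinf
        have hlen : A.length = YY.length := by rw [hYA]
        have hS0 : S = [] := List.length_eq_zero_iff.mp (by omega)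
        subst hS0
        simp only [List.nil_append] at h
        rw [← hYA] at h
        have h3 := List.append_cancel_left h
        exact ⟨[], X', by simp [hYA], by simp, h3.symm⟩
      · push_neg at hc2
        -- A straddles: A = S ++ U with U a nonempty proper prefix of YY
        set U := YY.take (A.length - S.length) with hUdef
        have hlenU : U.length = A.length - S.length := by
          simp [hUdef, List.length_take]; omega
        have hUne : U ≠ [] := by
          intro hu
          have := congrArg List.length hu
          simp [hlenU] at this; omega
        have hAU : A = S ++ U := by
          conv_lhs => rw [htakeA]
          rw [List.take_append_of_le_length (show A.length - S.length ≤ YY.length by omega)]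
        have hsplit : YY = U ++ YY.drop (A.length - S.length) :=
          (List.take_append_drop _ _).symm
        obtain ⟨hU1, _⟩ := hM.2 YY hYY A hA U _ S hUne hsplit hAU
        have := congrArg List.length hU1
        rw [hlenU] at this
        omega

lemma main_aux {α : Type*} (M : Set (List α)) (hM : OverlapProp M) (hne : [] ∉ M) :
    ∀ (Y : List (List α)), Y ≠ [] → (∀ w ∈ Y, w ∈ M) →
    ∀ (X : List (List α)) (S T : List α), (∀ w ∈ X, w ∈ M) →
      X.flatten = S ++ Y.flatten ++ T →
      ∃ X₁ X₂, X = X₁ ++ Y ++ X₂ ∧ S = X₁.flatten ∧ T = X₂.flatten := by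
  intro Y
  induction Y with
  | nil => intro h; exact absurd rfl h
  | cons Y₁ Y' ih =>
    intro _ hY X S T hX h
    have hY₁ : Y₁ ∈ M := hY Y₁ (by simp)
    have hY' : ∀ w ∈ Y', w ∈ M := fun w hw => hY w (by simp [hw])
    simp only [List.flatten_cons] at h
    obtain ⟨X₁, X₂, hx, hs, hr⟩ := key_s6 M hM hne Y₁ hY₁ X hX S (Y'.flatten ++ T)
      (by rw [h]; simp [List.append_assoc])
    have hX₂ : ∀ w ∈ X₂, w ∈ M := by
      intro w hw; exact hX w (by simp [hx, hw])
    by_cases hY'0 : Y' = []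
    · subst hY'0
      simp only [List.flatten_nil, List.nil_append] at hr
      exact ⟨X₁, X₂, by simpa using hx, hs, hr⟩
    · obtain ⟨X₁', X₂', hx', hs', ht'⟩ := ih hY'0 hY' X₂ [] T hX₂ (by simp [hr])
      have : X₁' = [] := flat_nil hne (fun w hw => hX₂ w (by simp [hx', hw])) hs'.symm
      subst this
      simp only [List.nil_append] at hx'
      exact ⟨X₁, X₂', by simp [hx, hx'], hs, ht'⟩

/-- if `M` satisfies the overlap property and
`X₁⋯X_t ≡ S Y₁⋯Y_m T` with all `X_n, Y_j ∈ M`, then the `Y_j` match up with a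
consecutive block of the `X_n`, `S` being the product of the preceding `X`'s and
`T` the product of the following ones. -/
theorem stmt6 {α : Type*} [Fintype α] (M : Set (List α)) (hM : OverlapProp M)
    (hne : [] ∉ M) (X Y : List (List α)) (S T : List α)
    (hX : ∀ w ∈ X, w ∈ M) (hY : ∀ w ∈ Y, w ∈ M) (hX0 : X ≠ []) (hY0 : Y ≠ [])
    (h : X.flatten = S ++ Y.flatten ++ T) :
    ∃ X₁ X₂ : List (List α), X = X₁ ++ Y ++ X₂ ∧ S = X₁.flatten ∧ T = X₂.flatten :=
  main_aux M hM hne Y hY0 hY X S T hX h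
end

section
/- Let M be a set of words over a finite alphabet satisfying the overlap property. Then the subsemigroup of the free semigroup generated by M is free with free basis M; equivalently, if X₁⋯X_t ≡ Y₁⋯Y_m with all X_n, Y_j ∈ M, then t = m and X_j ≡ Y_j for all j. -/
lemma flatten_nil_aux {α : Type*} (M : Set (List α)) (hne : [] ∉ M)
    (L : List (List α)) (hL : ∀ w ∈ L, w ∈ M) (h : L.flatten = []) : L = [] := by
  cases L with
  | nil => rfl
  | cons z Zt =>
    exfalso
    rw [List.flatten_cons, List.append_eq_nil_iff] at h
    exact hne (h.1 ▸ hL z List.mem_cons_self)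

/-- if `M` satisfies the overlap property then the subsemigroup of the free
semigroup generated by `M` is free with basis `M`: factorizations over `M` are unique. -/
theorem stmt7 {α : Type*} [Fintype α] (M : Set (List α)) (hM : OverlapProp M)
    (hne : [] ∉ M) (X Y : List (List α))
    (hX : ∀ w ∈ X, w ∈ M) (hY : ∀ w ∈ Y, w ∈ M) (hX0 : X ≠ []) (hY0 : Y ≠ [])
    (h : X.flatten = Y.flatten) :
    X = Y := by
  induction X generalizing Y with
  | nil => exact absurd rfl hX0
  | cons x Xt ih =>
    cases Y with
    | nil => exact absurd rfl hY0
    | cons y Yt =>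
      rw [List.flatten_cons, List.flatten_cons] at h
      have hx : x ∈ M := hX _ List.mem_cons_self
      have hy : y ∈ M := hY _ List.mem_cons_self
      have hxy : x = y := by
        rcases List.prefix_or_prefix_of_prefix (l₃ := x ++ Xt.flatten)
            ⟨Xt.flatten, rfl⟩ ⟨Yt.flatten, h.symm⟩ with hp | hp
        · exact hM.1 x hx y hy hp.isInfix
        · exact (hM.1 y hy x hx hp.isInfix).symm
      subst hxy
      have ht : Xt.flatten = Yt.flatten := List.append_cancel_left h
      have hXM : ∀ w ∈ Xt, w ∈ M := fun w hw => hX w (List.mem_cons_of_mem _ hw)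
      have hYM : ∀ w ∈ Yt, w ∈ M := fun w hw => hY w (List.mem_cons_of_mem _ hw)
      by_cases hXt : Xt = []
      · subst hXt
        have : Yt = [] := flatten_nil_aux M hne Yt hYM (by simpa using ht.symm)
        rw [this]
      · have hYt : Yt ≠ [] := by
          intro h0
          exact hXt (flatten_nil_aux M hne Xt hXM (by simpa [h0] using ht))
        rw [ih Yt hXM hYM hXt hYt ht]
end

section
/- Let M be an exponential set of words over a finite alphabet, and let S be a semigroup with a function l : S → ℕ satisfying: (D1) l(gh) ≤ l(g)+l(h), and (D2) there is a > 0 with card{g ∈ S : l(g) ≤ r} ≤ a^r for all r ∈ ℕ. Then there exists a constant d > 0 and an injection g ↦ X_g from S into M such that l(g) ≤ ‖X_g‖ < d·l(g) for all g ∈ S. -/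
/-- A set of words over a finite alphabet is exponential if
`card{X ∈ M : ‖X‖ ≤ i} ≥ c^i` for some `c > 1` and all large `i`. -/
def ExpSet {α : Type*} (M : Set (List α)) : Prop :=
  ∃ (N : ℕ) (c : ℝ), 1 < c ∧ ∀ i : ℕ, N ≤ i →
    c ^ i ≤ ({x ∈ M | x.length ≤ i}).ncard

private lemma listCount {α : Type*} [Fintype α] (n : ℕ) :
    {l : List α | l.length ≤ n}.ncard ≤ (Fintype.card α + 1) ^ n := by
  classical
  have hfin := List.finite_length_le α n
  rw [Set.ncard_eq_toFinset_card _ hfin]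
  have : hfin.toFinset.card ≤ (Finset.univ : Finset (Fin n → Option α)).card := by
    apply Finset.card_le_card_of_injOn (fun l (i : Fin n) => l[i.1]?)
      (fun _ _ => Finset.mem_univ _)
    intro l₁ h₁ l₂ h₂ h
    simp only [Finset.mem_coe, Set.Finite.mem_toFinset, Set.mem_setOf_eq] at h₁ h₂
    apply List.ext_getElem?
    intro i
    by_cases hi : i < n
    · exact congrFun h ⟨i, hi⟩
    · rw [List.getElem?_eq_none (h₁.trans (Nat.le_of_not_lt hi)),
        List.getElem?_eq_none (h₂.trans (Nat.le_of_not_lt hi))]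
  simpa [Fintype.card_option] using this

/-- given an exponential set `M` and `l : S → ℕ` satisfying (D1) and (D2),
there are `d > 0` and an injection `g ↦ X_g` of `S` into `M` with `l(g) ≤ ‖X_g‖ < d·l(g)`. -/
theorem stmt8 {α : Type*} [Fintype α] (M : Set (List α)) (hM : ExpSet M)
    {S : Type*} [Semigroup S] (l : S → ℕ) (hpos : ∀ g, 1 ≤ l g)
    (hD1 : ∀ g h : S, l (g * h) ≤ l g + l h)
    (hD2 : ∃ a : ℝ, 0 < a ∧ ∀ r : ℕ, {g : S | l g ≤ r}.Finite ∧
      ({g : S | l g ≤ r}).ncard ≤ a ^ r) :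
    ∃ d : ℝ, 0 < d ∧ ∃ F : S → List α, Function.Injective F ∧
      ∀ g : S, F g ∈ M ∧ (l g : ℝ) ≤ (F g).length ∧ ((F g).length : ℝ) < d * l g := by
  classical
  obtain ⟨N, c, hc, hMc⟩ := hM
  obtain ⟨a, ha, hD2⟩ := hD2
  set k : ℕ := Fintype.card α with hk
  set b : ℝ := max a (max ((k : ℝ) + 1) 2) with hbdef
  have hb2 : (2 : ℝ) ≤ b := le_max_of_le_right (le_max_right _ _)
  have hba : a ≤ b := le_max_left _ _
  have hbk : (k : ℝ) + 1 ≤ b := le_max_of_le_right (le_max_left _ _)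
  have hb1 : (1 : ℝ) ≤ b := by linarith
  have hb0 : (0 : ℝ) ≤ b := by linarith
  have hc1 : (1 : ℝ) ≤ c := hc.le
  obtain ⟨m, hm⟩ := pow_unbounded_of_one_lt (b ^ 2) hc
  set D : ℕ := max (m + 1) (N + 1) with hDdef
  have hDm : m + 1 ≤ D := le_max_left _ _
  have hDN : N + 1 ≤ D := le_max_right _ _
  -- the candidate word sets
  set W : ℕ → Set (List α) := fun r => {X ∈ M | r ≤ X.length ∧ X.length ≤ D * r - 1}
    with hWdef
  have hWfin : ∀ r, (W r).Finite := by
    intro r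
    apply (List.finite_length_le α (D * r)).subset
    intro X hX
    exact le_trans hX.2.2 (Nat.sub_le _ _)
  -- key counting estimate
  have hWcard : ∀ r : ℕ, 1 ≤ r → (b : ℝ) ^ r ≤ ((W r).ncard : ℝ) := by
    intro r hr
    have hDr : N ≤ D * r - 1 := by
      have : D ≤ D * r := Nat.le_mul_of_pos_right D hr
      omega
    have h1 : (c : ℝ) ^ (D * r - 1) ≤ ({x ∈ M | x.length ≤ D * r - 1}).ncard :=
      hMc _ hDr
    have hsplit : {x ∈ M | x.length ≤ D * r - 1} ⊆ W r ∪ {x ∈ M | x.length ≤ r - 1} := by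
      intro X hX
      rcases Nat.lt_or_ge X.length r with h | h
      · exact Or.inr ⟨hX.1, by omega⟩
      · exact Or.inl ⟨hX.1, h, hX.2⟩
    have hsmallfin : {x ∈ M | x.length ≤ r - 1}.Finite :=
      (List.finite_length_le α (r - 1)).subset (fun X hX => hX.2)
    have h2 : ({x ∈ M | x.length ≤ D * r - 1}).ncard ≤
        (W r).ncard + ({x ∈ M | x.length ≤ r - 1}).ncard := by
      refine le_trans (Set.ncard_le_ncard hsplit ((hWfin r).union hsmallfin)) ?_
      exact Set.ncard_union_le _ _
    have h3 : ({x ∈ M | x.length ≤ r - 1}).ncard ≤ (k + 1) ^ r := by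
      refine le_trans (Set.ncard_le_ncard (fun X hX => hX.2) (List.finite_length_le α (r-1)))
        ?_
      refine le_trans (listCount (r - 1)) ?_
      exact Nat.pow_le_pow_right (by omega) (by omega)
    -- now go to ℝ
    have hk1 : ((k : ℝ) + 1) ^ r ≤ b ^ r := pow_le_pow_left₀ (by positivity) hbk r
    have h3' : (({x ∈ M | x.length ≤ r - 1}).ncard : ℝ) ≤ b ^ r := by
      refine le_trans ?_ hk1
      exact_mod_cast h3
    have hbig : (b : ℝ) ^ (2 * r) ≤ c ^ (D * r - 1) := by
      have e1 : (b : ℝ) ^ (2 * r) = (b ^ 2) ^ r := by rw [← pow_mul]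
      have e2 : (c : ℝ) ^ (m * r) = (c ^ m) ^ r := by rw [← pow_mul]
      have : ((b : ℝ) ^ 2) ^ r ≤ (c ^ m) ^ r :=
        pow_le_pow_left₀ (by positivity) hm.le r
      rw [e1]
      refine le_trans this ?_
      rw [← e2]
      apply pow_le_pow_right₀ hc1
      have h5 : (m + 1) * r ≤ D * r := Nat.mul_le_mul_right r hDm
      rw [add_mul, one_mul] at h5
      omega
    have h2' : (({x ∈ M | x.length ≤ D * r - 1}).ncard : ℝ) ≤
        ((W r).ncard : ℝ) + (({x ∈ M | x.length ≤ r - 1}).ncard : ℝ) := by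
      exact_mod_cast h2
    have hbr2 : (2 : ℝ) ≤ b ^ r := le_trans hb2 (le_self_pow₀ hb1 (by omega))
    have h2b : (2 : ℝ) * b ^ r ≤ b ^ (2 * r) := by
      have e3 : (b : ℝ) ^ (2 * r) = b ^ r * b ^ r := by rw [two_mul, pow_add]
      nlinarith
    nlinarith [h1, h2', h3', hbig, h2b]
  -- Hall's marriage theorem
  set t : S → Finset (List α) := fun g => (hWfin (l g)).toFinset with htdef
  have hall : ∀ s : Finset S, s.card ≤ (s.biUnion t).card := by
    intro s
    rcases s.eq_empty_or_nonempty with rfl | hne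
    · simp
    obtain ⟨g₀, hg₀, hmax⟩ := s.exists_max_image l hne
    set r := l g₀ with hr
    have hr1 : 1 ≤ r := hpos g₀
    have hs1 : (s.card : ℝ) ≤ a ^ r := by
      have hsub : (s : Set S) ⊆ {g | l g ≤ r} := fun g hg => hmax g hg
      have := Set.ncard_le_ncard hsub (hD2 r).1
      rw [Set.ncard_coe_finset] at this
      exact le_trans (by exact_mod_cast this) (hD2 r).2
    have hs2 : ((W r).ncard : ℝ) ≤ ((s.biUnion t).card : ℝ) := by
      have hsub : (hWfin r).toFinset ⊆ s.biUnion t := by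
        refine le_trans (le_of_eq ?_) (Finset.subset_biUnion_of_mem t hg₀)
        rfl
      have := Finset.card_le_card hsub
      rw [Set.ncard_eq_toFinset_card _ (hWfin r)]
      exact_mod_cast this
    have har : (a : ℝ) ^ r ≤ b ^ r := pow_le_pow_left₀ ha.le hba r
    have : (s.card : ℝ) ≤ ((s.biUnion t).card : ℝ) :=
      le_trans hs1 (le_trans har (le_trans (hWcard r hr1) hs2))
    exact_mod_cast this
  obtain ⟨f, hfinj, hft⟩ := (Finset.all_card_le_biUnion_card_iff_exists_injective t).mp hall
  refine ⟨(D : ℝ), by positivity, f, hfinj, fun g => ?_⟩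
  have hfg : f g ∈ W (l g) := by
    have := hft g
    rwa [htdef, Set.Finite.mem_toFinset] at this
  obtain ⟨hmem, hlow, hhigh⟩ := hfg
  refine ⟨hmem, by exact_mod_cast hlow, ?_⟩
  have hlt : (f g).length < D * l g := by
    have hD1' : 1 ≤ D := le_trans (by omega) hDN
    have : 1 ≤ D * l g := Nat.mul_pos (by omega) (hpos g)
    omega
  exact_mod_cast hlt
end

section
/- Let S be a semigroup and let {X_g}_{g∈S} be an injective family of words over {b₁, b₂} lying in a set satisfying the overlap property. Then the homomorphism β from the free semigroup on {x_g : g ∈ S} to the free semigroup F(b₁,b₂) defined by β(x_g) = X_g is injective. -/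
/-- The word (nonempty list of letters) corresponding to an element of a free semigroup. -/
def FSword {α : Type*} (x : FreeSemigroup α) : List α := x.head :: x.tail

lemma FSword_mul {α : Type*} (x y : FreeSemigroup α) :
    FSword (x * y) = FSword x ++ FSword y := by
  simp [FSword]

lemma FSword_inj {α : Type*} : Function.Injective (FSword (α := α)) := by
  rintro ⟨a, l⟩ ⟨b, m⟩ h
  simp only [FSword, List.cons.injEq] at h
  simp [h.1, h.2]

lemma code_lemma {α : Type*} {M : Set (List α)}
    (h1 : ∀ Y ∈ M, ∀ Z ∈ M, Y <:+: Z → Y = Z)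
    {Y Z A B : List α} (hY : Y ∈ M) (hZ : Z ∈ M) (h : Y ++ A = Z ++ B) : Y = Z := by
  have hYp : Y <+: Z ++ B := h ▸ List.prefix_append Y A
  have hZp : Z <+: Z ++ B := List.prefix_append Z B
  rcases List.prefix_or_prefix_of_prefix hYp hZp with hp | hp
  · exact h1 Y hY Z hZ hp.isInfix
  · exact (h1 Z hZ Y hY hp.isInfix).symm

lemma bind_inj {S α : Type*} {M : Set (List α)}
    (h1 : ∀ Y ∈ M, ∀ Z ∈ M, Y <:+: Z → Y = Z)
    (w : S → List α) (hw : ∀ g, w g ∈ M) (hwne : ∀ g, w g ≠ [])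
    (hwinj : Function.Injective w) :
    ∀ L₁ L₂ : List S, L₁.flatMap w = L₂.flatMap w → L₁ = L₂ := by
  intro L₁
  induction L₁ with
  | nil =>
    intro L₂ h
    cases L₂ with
    | nil => rfl
    | cons g t =>
      exfalso
      simp only [List.flatMap_nil, List.flatMap_cons] at h
      exact hwne g (List.append_eq_nil_iff.mp h.symm).1
  | cons g₁ t₁ ih =>
    intro L₂ h
    cases L₂ with
    | nil =>
      exfalso
      simp only [List.flatMap_nil, List.flatMap_cons] at h
      exact hwne g₁ (List.append_eq_nil_iff.mp h).1
    | cons g₂ t₂ =>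
      simp only [List.flatMap_cons] at h
      have hg : w g₁ = w g₂ := code_lemma h1 (hw g₁) (hw g₂) h
      have hgg : g₁ = g₂ := hwinj hg
      subst hgg
      rw [hg] at h
      have := List.append_cancel_left h
      rw [ih t₂ this]

lemma FSword_lift {S α : Type*} [Semigroup S] (X : S → FreeSemigroup α)
    (a : FreeSemigroup S) :
    FSword (FreeSemigroup.lift X a) = (FSword a).flatMap (fun g => FSword (X g)) := by
  induction a with
  | ih1 g =>
    show FSword (FreeSemigroup.lift X (FreeSemigroup.of g)) = _
    rw [FreeSemigroup.lift_of]
    simp [FSword, FreeSemigroup.of]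
  | ih2 x y hx hy =>
    rw [map_mul, FSword_mul, FSword_mul, hx, hy]
    simp [List.flatMap_append]

/-- if `{X_g}_{g ∈ S}` is an injective family of words over `{b₁,b₂}` lying in
a set `M` satisfying the overlap property, then the homomorphism `β` of the free semigroup on
`{x_g : g ∈ S}` to `F(b₁,b₂)` defined by `β(x_g) = X_g` is injective. -/
theorem stmt10 {S : Type*} [Semigroup S] (M : Set (List (Fin 2))) (hM : OverlapProp M)
    (hne : [] ∉ M) (X : S → FreeSemigroup (Fin 2)) (hinj : Function.Injective X)
    (hmem : ∀ g : S, FSword (X g) ∈ M) :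
    Function.Injective ⇑(FreeSemigroup.lift X) := by
  intro a b hab
  have hwne : ∀ g : S, FSword (X g) ≠ [] := fun g => by simp [FSword]
  have hwinj : Function.Injective (fun g => FSword (X g)) :=
    fun g₁ g₂ h => hinj (FSword_inj h)
  have h : FSword (FreeSemigroup.lift X a) = FSword (FreeSemigroup.lift X b) := by rw [hab]
  rw [FSword_lift, FSword_lift] at h
  exact FSword_inj (bind_inj hM.1 _ hmem hwne hwinj _ _ h)
end

section
/- For any semigroup S and any function l : S → ℕ satisfying (D1) l(gh) ≤ l(g)+l(h) and (D2) card{g ∈ S : l(g) ≤ r} ≤ a^r for some a > 0 and all r, there exists an embedding of S into a semigroup H generated by a two-element set B = {b₁, b₂} such that the restriction of the length function |·|_B to S is equivalent to l, i.e., there exist constants c₁, c₂ > 0 with c₁ l(g) ≤ |g|_B ≤ c₂ l(g) for all g ∈ S. -/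
/-- The product of a (nonempty) list of elements of a semigroup; `none` for the empty list. -/
def listProd {M : Type*} [Semigroup M] : List M → Option M
  | [] => none
  | a :: t => some (t.foldl (· * ·) a)

/-- `RepLen B h n` : `h` is represented by some word of length `n` over the alphabet `B`. -/
def RepLen {M : Type*} [Semigroup M] (B : Set M) (h : M) (n : ℕ) : Prop :=
  ∃ w : List M, (∀ x ∈ w, x ∈ B) ∧ listProd w = some h ∧ w.length = n

/-- `lenOf B h` : the length of a shortest word over `B` representing `h`. -/
noncomputable def lenOf {M : Type*} [Semigroup M] (B : Set M) (h : M) : ℕ :=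
  sInf {n | RepLen B h n}
universe u

set_option linter.unusedSectionVars false

namespace S13

open List

def tA : ULift.{u} Bool := ⟨true⟩
def fA : ULift.{u} Bool := ⟨false⟩

theorem tA_ne_fA : (tA : ULift.{u} Bool) ≠ fA := by
  simp [tA, fA]

variable {S : Type u} [Semigroup S]

/-- The code of an element: two `tA` markers followed by its body. -/
def code (α : S → List (ULift.{u} Bool)) (g : S) : List (ULift.{u} Bool) :=
  tA :: tA :: α g

theorem code_inj {α : S → List (ULift.{u} Bool)}
    (hpf : ∀ g h : S, α g <+: α h → g = h) {x y : S}
    (h : code α x <+: code α y) : x = y := by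
  rw [code, code, cons_prefix_cons, cons_prefix_cons] at h
  exact hpf _ _ h.2.2

def apply' (y : S) (s : Option S) : S := (s.map (· * y)).getD y

theorem apply'_mul (g h : S) (s : Option S) :
    apply' (g * h) s = apply' h (some (apply' g s)) := by
  cases s <;> simp [apply', mul_assoc]

open scoped Classical in
noncomputable def step (α : S → List (ULift.{u} Bool)) (b : ULift.{u} Bool)
    (x : Option (Option S × List (ULift.{u} Bool))) :
    Option (Option S × List (ULift.{u} Bool)) :=
  match x with
  | none => none
  | some (s, buf) =>
    if h : ∃ y, code α y = buf ++ [b] then some (some (apply' h.choose s), [])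
    else if ∃ y, buf ++ [b] <+: code α y then some (s, buf ++ [b]) else none

noncomputable def run (α : S → List (ULift.{u} Bool)) (w : List (ULift.{u} Bool))
    (x : Option (Option S × List (ULift.{u} Bool))) :
    Option (Option S × List (ULift.{u} Bool)) :=
  w.foldl (fun x b => step α b x) x

@[simp] theorem run_nil (α : S → List (ULift.{u} Bool)) (x) : run α [] x = x := rfl

@[simp] theorem run_cons (α : S → List (ULift.{u} Bool)) (b w x) :
    run α (b :: w) x = run α w (step α b x) := rfl

theorem run_append (α : S → List (ULift.{u} Bool)) (u v x) :
    run α (u ++ v) x = run α v (run α u x) := by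
  simp [run, List.foldl_append]

@[simp] theorem step_none (α : S → List (ULift.{u} Bool)) (b) : step α b none = none := rfl

@[simp] theorem run_none (α : S → List (ULift.{u} Bool)) (w) : run α w none = none := by
  induction w with
  | nil => rfl
  | cons b w ih => simp [ih]

theorem step_flush {α : S → List (ULift.{u} Bool)}
    (hpf : ∀ g h : S, α g <+: α h → g = h) {g : S} {buf : List (ULift.{u} Bool)}
    {b : ULift.{u} Bool} (hg : code α g = buf ++ [b]) (s : Option S) :
    step α b (some (s, buf)) = some (some (apply' g s), []) := by
  have hex : ∃ y, code α y = buf ++ [b] := ⟨g, hg⟩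
  have hch : hex.choose = g := by
    have h1 : code α hex.choose = code α g := hex.choose_spec.trans hg.symm
    exact code_inj hpf (h1 ▸ List.prefix_refl _)
  simp only [step, dif_pos hex, hch]

theorem step_mid {α : S → List (ULift.{u} Bool)} {buf : List (ULift.{u} Bool)}
    {b : ULift.{u} Bool}
    (hnf : ∀ y, code α y ≠ buf ++ [b]) (hp : ∃ y, buf ++ [b] <+: code α y) (s : Option S) :
    step α b (some (s, buf)) = some (s, buf ++ [b]) := by
  have hne : ¬ ∃ y, code α y = buf ++ [b] := by
    rintro ⟨y, hy⟩; exact hnf y hy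
  simp only [step, dif_neg hne, if_pos hp]

theorem step_dead {α : S → List (ULift.{u} Bool)} {buf : List (ULift.{u} Bool)}
    {b : ULift.{u} Bool}
    (hnp : ¬ ∃ y, buf ++ [b] <+: code α y) (s : Option S) :
    step α b (some (s, buf)) = none := by
  have hne : ¬ ∃ y, code α y = buf ++ [b] := by
    rintro ⟨y, hy⟩; exact hnp ⟨y, hy ▸ List.prefix_refl _⟩
  simp only [step, dif_neg hne, if_neg hnp]
theorem run_code_aux {α : S → List (ULift.{u} Bool)}
    (hpf : ∀ g h : S, α g <+: α h → g = h) (g : S) :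
    ∀ (q p : List (ULift.{u} Bool)) (s : Option S), code α g = p ++ q → q ≠ [] →
      run α q (some (s, p)) = some (some (apply' g s), []) := by
  intro q
  induction q with
  | nil => intro p s _ hq; exact absurd rfl hq
  | cons b q' ih =>
    intro p s hcode _
    cases q' with
    | nil =>
      rw [run_cons, step_flush hpf (by simpa using hcode) s, run_nil]
    | cons b' q'' =>
      rw [run_cons]
      have hnf : ∀ y, code α y ≠ p ++ [b] := by
        intro y hy
        have hyg : y = g := by
          apply code_inj hpf
          rw [hy, hcode]
          exact (List.prefix_append_right_inj p).2 ⟨b' :: q'', by simp⟩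
        rw [hyg, hcode] at hy
        have := congrArg List.length hy
        simp at this
      have hp : ∃ y, p ++ [b] <+: code α y := by
        refine ⟨g, ?_⟩
        rw [hcode]
        exact (List.prefix_append_right_inj p).2 ⟨b' :: q'', by simp⟩
      rw [step_mid hnf hp s]
      exact ih (p ++ [b]) s (by rw [hcode]; simp) (by simp)

theorem run_code {α : S → List (ULift.{u} Bool)}
    (hpf : ∀ g h : S, α g <+: α h → g = h) (g : S) (s : Option S) :
    run α (code α g) (some (s, [])) = some (some (apply' g s), []) :=
  run_code_aux hpf g (code α g) [] s (by simp) (by simp [code])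

theorem alpha_ne_nil {α : S → List (ULift.{u} Bool)}
    (hhead : ∀ g, (α g).head? = some fA) (g : S) : α g ≠ [] := by
  intro h
  have := hhead g
  rw [h] at this
  simp at this

theorem no_flush_t {α : S → List (ULift.{u} Bool)}
    (hhead : ∀ g, (α g).head? = some fA)
    (hlast : ∀ g, (α g).getLast? = some fA) (y : S) (buf : List (ULift.{u} Bool)) :
    code α y ≠ buf ++ [tA] := by
  intro h
  have h1 : (code α y).getLast? = some fA := by
    rw [code, show tA :: tA :: α y = [tA, tA] ++ α y from rfl,
      List.getLast?_append_of_ne_nil _ (alpha_ne_nil hhead y)]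
    exact hlast y
  rw [h, List.getLast?_concat] at h1
  exact tA_ne_fA (Option.some.inj h1)
/-- From any state with a nonempty buffer, reading two `tA`s kills the automaton. -/
theorem run_tt_dead {α : S → List (ULift.{u} Bool)}
    (hhead : ∀ g, (α g).head? = some fA)
    (hlast : ∀ g, (α g).getLast? = some fA)
    (hchain : ∀ g, (α g).Chain' (fun x y => x = fA ∨ y = fA))
    (s : Option S) (buf : List (ULift.{u} Bool)) (hbuf : buf ≠ []) :
    run α [tA, tA] (some (s, buf)) = none := by
  by_cases h1 : ∃ y, buf ++ [tA] <+: code α y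
  · have hs1 : step α tA (some (s, buf)) = some (s, buf ++ [tA]) :=
      step_mid (fun y => no_flush_t hhead hlast y buf) h1 s
    obtain ⟨y1, hy1⟩ := h1
    obtain ⟨b0, rest, rfl⟩ : ∃ b0 rest, buf = b0 :: rest := by
      cases buf with
      | nil => exact absurd rfl hbuf
      | cons b0 rest => exact ⟨b0, rest, rfl⟩
    have hy1' : (b0 :: (rest ++ [tA])) <+: tA :: tA :: α y1 := by simpa [code] using hy1
    rw [cons_prefix_cons] at hy1'
    obtain ⟨rfl, hy1''⟩ := hy1'
    rw [run_cons, hs1, run_cons]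
    cases rest with
    | nil =>
      have hdead : ¬ ∃ z, ([tA] ++ [tA]) ++ [tA] <+: code α z := by
        rintro ⟨z, hz⟩
        rw [code] at hz
        simp only [cons_append, nil_append, cons_prefix_cons] at hz
        obtain ⟨-, -, hz⟩ := hz
        obtain ⟨t', ht⟩ := hz
        have := hhead z
        rw [← ht] at this
        simp at this
        exact tA_ne_fA this
      rw [step_dead hdead s, run_none]
    | cons b1 rest' =>
      have hy1''' : b1 :: (rest' ++ [tA]) <+: tA :: α y1 := by simpa using hy1''
      rw [cons_prefix_cons] at hy1'''
      obtain ⟨rfl, -⟩ := hy1'''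
      have hdead : ¬ ∃ z, ((tA :: tA :: rest') ++ [tA]) ++ [tA] <+: code α z := by
        rintro ⟨z, hz⟩
        rw [code] at hz
        have hz' : (rest' ++ [tA]) ++ [tA] <+: α z := by
          simp only [cons_append, cons_prefix_cons] at hz
          exact hz.2.2
        have hinf : [tA, tA] <:+: α z := by
          have h3 : [tA, tA] <:+ (rest' ++ [tA]) ++ [tA] := by
            refine ⟨rest', by simp⟩
          exact h3.isInfix.trans hz'.isInfix
        have := (hchain z).infix hinf
        rw [List.isChain_pair] at this
        rcases this with h | h <;> exact tA_ne_fA h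
      rw [step_dead hdead s, run_none]
  · rw [run_cons, step_dead h1 s, run_cons, step_none, run_none]

/-- The key relation: reading `code g ++ code h` is the same as reading `code (g*h)`. -/
theorem run_codes {α : S → List (ULift.{u} Bool)}
    (hhead : ∀ g, (α g).head? = some fA)
    (hlast : ∀ g, (α g).getLast? = some fA)
    (hchain : ∀ g, (α g).Chain' (fun x y => x = fA ∨ y = fA))
    (hpf : ∀ g h : S, α g <+: α h → g = h)
    (g h : S) (x : Option (Option S × List (ULift.{u} Bool))) :
    run α (code α g ++ code α h) x = run α (code α (g * h)) x := by
  cases x with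
  | none => simp
  | some sb =>
    obtain ⟨s, buf⟩ := sb
    rcases eq_or_ne buf [] with rfl | hbuf
    · rw [run_append, run_code hpf g s, run_code hpf h _, run_code hpf (g * h) s,
        apply'_mul]
    · have hgg : code α g ++ code α h = [tA, tA] ++ (α g ++ code α h) := by simp [code]
      have hgh : code α (g * h) = [tA, tA] ++ α (g * h) := by simp [code]
      rw [hgg, hgh]
      rw [run_append α [tA, tA] (α g ++ code α h),
        run_append α [tA, tA] (α (g * h)),
        run_tt_dead hhead hlast hchain s buf hbuf, run_none, run_none]
/-- Weight of an automaton state. -/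
def wt (l : S → ℕ) : Option (Option S × List (ULift.{u} Bool)) → ℕ
  | none => 0
  | some (s, buf) => (s.map l).getD 0 + buf.length

theorem wt_step {l : S → ℕ} {α : S → List (ULift.{u} Bool)}
    (hD1 : ∀ g h : S, l (g * h) ≤ l g + l h)
    (hlb : ∀ g, l g ≤ (α g).length + 2)
    (b : ULift.{u} Bool) (x : Option (Option S × List (ULift.{u} Bool))) :
    wt l (step α b x) ≤ wt l x + 1 := by
  cases x with
  | none => simp [wt]
  | some sb =>
    obtain ⟨s, buf⟩ := sb
    simp only [step]
    split_ifs with h1 h2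
    · have hspec := h1.choose_spec
      have hlen : (α h1.choose).length + 2 = buf.length + 1 := by
        have := congrArg List.length hspec
        simpa [code] using this
      have hy : l h1.choose ≤ buf.length + 1 := by
        have := hlb h1.choose
        omega
      cases s with
      | none =>
        simp only [wt, apply', Option.map_none, Option.getD_none, Option.map_some,
          Option.getD_some, List.length_nil]
        omega
      | some t =>
        simp only [wt, apply', Option.map_none, Option.getD_none, Option.map_some,
          Option.getD_some, List.length_nil]
        have := hD1 t h1.choose
        omega
    · simp only [wt, List.length_append, List.length_cons, List.length_nil]
      omega
    · simp [wt]

theorem wt_run {l : S → ℕ} {α : S → List (ULift.{u} Bool)}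
    (hD1 : ∀ g h : S, l (g * h) ≤ l g + l h)
    (hlb : ∀ g, l g ≤ (α g).length + 2)
    (w : List (ULift.{u} Bool)) :
    ∀ x, wt l (run α w x) ≤ wt l x + w.length := by
  induction w with
  | nil => intro x; simp
  | cons b w ih =>
    intro x
    rw [run_cons]
    calc wt l (run α w (step α b x)) ≤ wt l (step α b x) + w.length := ih _
      _ ≤ wt l x + 1 + w.length := by have := wt_step hD1 hlb b x; omega
      _ = wt l x + (b :: w).length := by simp; omega
/-- The list of letters of an element of the free semigroup. -/
def toL (x : FreeSemigroup (ULift.{u} Bool)) : List (ULift.{u} Bool) := x.1 :: x.2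

theorem toL_mul (x y : FreeSemigroup (ULift.{u} Bool)) : toL (x * y) = toL x ++ toL y := by
  simp [toL]

/-- The congruence: two words are equivalent iff the automaton acts identically. -/
noncomputable def rc (α : S → List (ULift.{u} Bool)) : Con (FreeSemigroup (ULift.{u} Bool)) where
  r x y := run α (toL x) = run α (toL y)
  iseqv := ⟨fun _ => rfl, Eq.symm, Eq.trans⟩
  mul' {w x y z} h1 h2 := by
    funext pt
    rw [toL_mul, toL_mul, run_append, run_append, congrFun h1 pt, congrFun h2 _]

theorem rc_iff (α : S → List (ULift.{u} Bool)) (x y : FreeSemigroup (ULift.{u} Bool)) :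
    rc α x y ↔ run α (toL x) = run α (toL y) := Iff.rfl

/-- The mul-hom `S →ₙ* H`. -/
noncomputable def phi (α : S → List (ULift.{u} Bool))
    (hhead : ∀ g, (α g).head? = some fA)
    (hlast : ∀ g, (α g).getLast? = some fA)
    (hchain : ∀ g, (α g).Chain' (fun x y => x = fA ∨ y = fA))
    (hpf : ∀ g h : S, α g <+: α h → g = h) :
    S →ₙ* (rc α).Quotient where
  toFun g := ((⟨tA, tA :: α g⟩ : FreeSemigroup (ULift.{u} Bool)) : (rc α).Quotient)
  map_mul' g h := by
    rw [← Con.coe_mul, Con.eq]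
    show run α (toL _) = run α (toL _)
    have h1 : toL ((⟨tA, tA :: α g⟩ : FreeSemigroup (ULift.{u} Bool)) * ⟨tA, tA :: α h⟩)
        = code α g ++ code α h := by
      simp [toL_mul, toL, code]
    have h2 : toL (⟨tA, tA :: α (g * h)⟩ : FreeSemigroup (ULift.{u} Bool))
        = code α (g * h) := rfl
    rw [h1, h2]
    funext x
    exact (run_codes hhead hlast hchain hpf g h x).symm
theorem phi_inj (α : S → List (ULift.{u} Bool))
    (hhead : ∀ g, (α g).head? = some fA)
    (hlast : ∀ g, (α g).getLast? = some fA)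
    (hchain : ∀ g, (α g).Chain' (fun x y => x = fA ∨ y = fA))
    (hpf : ∀ g h : S, α g <+: α h → g = h) :
    Function.Injective (phi α hhead hlast hchain hpf) := by
  intro g h hgh
  have h1 : run α (code α g) = run α (code α h) := (Con.eq _).1 hgh
  have h2 := congrFun h1 (some (none, []))
  rw [run_code hpf g none, run_code hpf h none] at h2
  have h3 : apply' g (none : Option S) = apply' h none := by
    simpa using h2
  simpa [apply'] using h3

/-- letters as elements of the quotient -/
noncomputable def ltr (α : S → List (ULift.{u} Bool)) (a : ULift.{u} Bool) :
    (rc α).Quotient := ((FreeSemigroup.of a : FreeSemigroup (ULift.{u} Bool)) : (rc α).Quotient)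

theorem closure_eq_top (α : S → List (ULift.{u} Bool)) :
    Subsemigroup.closure {ltr α fA, ltr α tA} = ⊤ := by
  rw [eq_top_iff]
  rintro x -
  induction x using Con.induction_on with
  | H y =>
    induction y using FreeSemigroup.recOnMul with
    | ih1 a =>
      obtain ⟨b⟩ := a
      cases b
      · exact Subsemigroup.subset_closure (by left; rfl)
      · exact Subsemigroup.subset_closure (by right; rfl)
    | ih2 x y hx hy =>
      rw [Con.coe_mul]
      exact Subsemigroup.mul_mem _ hx hy

theorem foldl_letters (α : S → List (ULift.{u} Bool)) (u : List (ULift.{u} Bool)) :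
    ∀ x : FreeSemigroup (ULift.{u} Bool),
      (u.map (ltr α)).foldl (· * ·) (x : (rc α).Quotient)
        = ((⟨x.1, x.2 ++ u⟩ : FreeSemigroup (ULift.{u} Bool)) : (rc α).Quotient) := by
  induction u with
  | nil => intro x; simp
  | cons a u ih =>
    intro x
    have h1 : (x : (rc α).Quotient) * ltr α a
        = ((x * FreeSemigroup.of a : FreeSemigroup (ULift.{u} Bool)) : (rc α).Quotient) :=
      (Con.coe_mul _ _).symm
    have h2 : x * FreeSemigroup.of a = (⟨x.1, x.2 ++ [a]⟩ : FreeSemigroup (ULift.{u} Bool)) := rfl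
    simp only [List.map_cons, List.foldl_cons, h1, h2, ih]
    congr 1
    simp

theorem listProd_letters (α : S → List (ULift.{u} Bool)) (a : ULift.{u} Bool)
    (u : List (ULift.{u} Bool)) :
    listProd ((a :: u).map (ltr α))
      = some ((⟨a, u⟩ : FreeSemigroup (ULift.{u} Bool)) : (rc α).Quotient) := by
  have h0 : (a :: u).map (ltr α) = ltr α a :: u.map (ltr α) := rfl
  rw [h0, listProd]
  rw [show ltr α a = ((FreeSemigroup.of a : FreeSemigroup (ULift.{u} Bool)) : (rc α).Quotient)
    from rfl, foldl_letters]
  rfl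

theorem mem_letters (α : S → List (ULift.{u} Bool)) (w : List ((rc α).Quotient))
    (hw : ∀ x ∈ w, x ∈ ({ltr α fA, ltr α tA} : Set ((rc α).Quotient))) :
    ∃ u : List (ULift.{u} Bool), w = u.map (ltr α) := by
  induction w with
  | nil => exact ⟨[], rfl⟩
  | cons x w ih =>
    obtain ⟨u, hu⟩ := ih (fun y hy => hw y (List.mem_cons_of_mem _ hy))
    have hx := hw x (List.mem_cons_self)
    rcases hx with hx | hx
    · exact ⟨fA :: u, by rw [hx, hu]; rfl⟩
    · exact ⟨tA :: u, by rw [hx, hu]; rfl⟩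
def blk : Bool → List (ULift.{u} Bool) := fun b => [fA, ⟨b⟩]

def enc (bits : List Bool) : List (ULift.{u} Bool) := bits.flatMap blk

theorem enc_head (bits : List Bool) (L : List (ULift.{u} Bool)) (hL : L.head? = some fA) :
    (enc bits ++ L).head? = some fA := by
  cases bits with
  | nil => simpa [enc]
  | cons b bs => simp [enc, blk]

theorem enc_chain (bits : List Bool) (L : List (ULift.{u} Bool)) (hL : L.head? = some fA)
    (hc : L.Chain' (fun x y => x = fA ∨ y = fA)) :
    (enc bits ++ L).Chain' (fun x y => x = fA ∨ y = fA) := by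
  induction bits with
  | nil => simpa [enc]
  | cons b bs ih =>
    have he : enc (b :: bs) ++ L = fA :: (⟨b⟩ : ULift.{u} Bool) :: (enc bs ++ L) := by
      simp [enc, blk]
    rw [he, show @List.Chain' = @List.IsChain from rfl, List.isChain_cons_cons]
    refine ⟨Or.inl rfl, ?_⟩
    rw [List.isChain_cons]
    refine ⟨fun y hy => ?_, ih⟩
    rw [enc_head bs L hL] at hy
    right
    exact (Option.mem_some_iff.1 hy).symm

theorem enc_inj : ∀ (b1 b2 : List Bool), enc b1 = enc b2 → b1 = b2 := by
  intro b1
  induction b1 with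
  | nil => intro b2 h; cases b2 with
    | nil => rfl
    | cons c cs => simp [enc, blk] at h
  | cons c cs ih =>
    intro b2 h
    cases b2 with
    | nil => simp [enc, blk] at h
    | cons d ds =>
      simp only [enc, blk, List.flatMap_cons, List.cons_append, List.nil_append,
        List.cons.injEq] at h
      obtain ⟨-, h1, h2⟩ := h
      have hcd : c = d := congrArg ULift.down h1
      rw [hcd, ih ds h2]

theorem enc_len (bits : List Bool) : (enc bits).length = 2 * bits.length := by
  induction bits with
  | nil => rfl
  | cons b bs ih => simp [enc, blk] at ih ⊢; omega

theorem chain_rep (n : ℕ) (L : List (ULift.{u} Bool))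
    (hc : L.Chain' (fun x y => x = fA ∨ y = fA)) :
    (List.replicate n fA ++ L).Chain' (fun x y => x = fA ∨ y = fA) := by
  induction n with
  | zero => simpa
  | succ n ih =>
    rw [List.replicate_succ, List.cons_append, show @List.Chain' = @List.IsChain from rfl, List.isChain_cons]
    exact ⟨fun y _ => Or.inl rfl, ih⟩

theorem rep_t : ∀ (n m : ℕ) (L M : List (ULift.{u} Bool)),
    (List.replicate n fA ++ tA :: L) <+: (List.replicate m fA ++ tA :: M) →
      n = m ∧ L <+: M := by
  intro n
  induction n with
  | zero =>
    intro m L M h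
    cases m with
    | zero =>
      simp only [List.replicate_zero, List.nil_append, cons_prefix_cons] at h
      exact ⟨rfl, h.2⟩
    | succ m =>
      rw [List.replicate_succ] at h
      simp only [List.replicate_zero, List.nil_append, List.cons_append,
        cons_prefix_cons] at h
      exact absurd h.1 tA_ne_fA
  | succ n ih =>
    intro m L M h
    cases m with
    | zero =>
      rw [List.replicate_succ] at h
      simp only [List.replicate_zero, List.nil_append, List.cons_append,
        cons_prefix_cons] at h
      exact absurd h.1.symm tA_ne_fA
    | succ m =>
      rw [List.replicate_succ, List.replicate_succ] at h
      simp only [List.cons_append, cons_prefix_cons] at h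
      obtain ⟨hnm, hLM⟩ := ih m L M h.2
      exact ⟨by omega, hLM⟩
theorem exists_alpha (l : S → ℕ) (hpos : ∀ g, 1 ≤ l g)
    (hD2 : ∃ a : ℝ, 0 < a ∧ ∀ r : ℕ, {g : S | l g ≤ r}.Finite ∧
      (({g : S | l g ≤ r}).ncard : ℝ) ≤ a ^ r) :
    ∃ (α : S → List (ULift.{u} Bool)) (C : ℕ), 0 < C ∧
      (∀ g, (α g).head? = some fA) ∧
      (∀ g, (α g).getLast? = some fA) ∧
      (∀ g, (α g).Chain' (fun x y => x = fA ∨ y = fA)) ∧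
      (∀ g h : S, α g <+: α h → g = h) ∧
      (∀ g, l g ≤ (α g).length + 2) ∧
      (∀ g, (α g).length + 2 ≤ C * l g) := by
  obtain ⟨a, ha, hD2⟩ := hD2
  obtain ⟨K, hKgt⟩ := exists_nat_gt a
  have hK : a ≤ (2 : ℝ) ^ K := by
    refine hKgt.le.trans ?_
    exact_mod_cast (Nat.lt_two_pow_self (n := K)).le
  have key : ∀ n : ℕ, ∃ fn : S → List Bool, (∀ g, l g = n → (fn g).length = K * n) ∧
      ∀ x y : S, l x = n → l y = n → fn x = fn y → x = y := by
    intro n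
    have hfin : {g : S | l g = n}.Finite := ((hD2 n).1).subset (fun g hg => le_of_eq hg)
    haveI := hfin.fintype
    have hcard : Fintype.card {g : S | l g = n} ≤ Fintype.card (Fin (K * n) → Bool) := by
      have e1 : Fintype.card (Fin (K * n) → Bool) = 2 ^ (K * n) := by simp
      have e2 : (Fintype.card {g : S | l g = n} : ℝ) ≤ 2 ^ (K * n) := by
        have h3 : Fintype.card {g : S | l g = n} = Set.ncard {g : S | l g = n} := by
          rw [← Nat.card_coe_set_eq, Nat.card_eq_fintype_card]
        rw [h3]
        have h4 : Set.ncard {g : S | l g = n} ≤ Set.ncard {g : S | l g ≤ n} :=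
          Set.ncard_le_ncard (fun g hg => le_of_eq hg) (hD2 n).1
        calc (Set.ncard {g : S | l g = n} : ℝ) ≤ Set.ncard {g : S | l g ≤ n} := by
              exact_mod_cast h4
          _ ≤ a ^ n := (hD2 n).2
          _ ≤ ((2 : ℝ) ^ K) ^ n := pow_le_pow_left₀ ha.le hK n
          _ = 2 ^ (K * n) := by rw [← pow_mul]
      rw [e1]
      exact_mod_cast e2
    obtain ⟨em⟩ := Function.Embedding.nonempty_of_card_le hcard
    refine ⟨fun g => if h : l g = n then List.ofFn (em ⟨g, h⟩) else [], ?_, ?_⟩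
    · intro g hg
      beta_reduce
      rw [dif_pos hg]
      simp
    · intro x y hx hy hxy
      beta_reduce at hxy
      rw [dif_pos hx, dif_pos hy] at hxy
      have h5 := List.ofFn_injective hxy
      have h6 := em.injective h5
      exact congrArg Subtype.val h6
  choose fn hlen hinj using key
  refine ⟨fun g => fA :: (List.replicate (l g) fA ++ tA :: (enc (fn (l g) g) ++ [fA])),
    2 * K + 6, by omega, ?_, ?_, ?_, ?_, ?_, ?_⟩
  · intro g; rfl
  · intro g
    have hrw : fA :: (List.replicate (l g) fA ++ tA :: (enc (fn (l g) g) ++ [fA]))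
        = (fA :: (List.replicate (l g) fA ++ tA :: enc (fn (l g) g))) ++ [fA] := by
      simp
    beta_reduce
    rw [hrw, List.getLast?_concat]
  · intro g
    beta_reduce
    rw [show @List.Chain' = @List.IsChain from rfl, List.isChain_cons]
    refine ⟨fun y _ => Or.inl rfl, ?_⟩
    apply chain_rep
    rw [show @List.Chain' = @List.IsChain from rfl, List.isChain_cons]
    refine ⟨fun y hy => ?_, ?_⟩
    · rw [enc_head _ [fA] rfl] at hy
      exact Or.inr (Option.mem_some_iff.1 hy).symm
    · exact enc_chain _ [fA] rfl (List.isChain_singleton _)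
  · intro x y h
    beta_reduce at h
    rw [cons_prefix_cons] at h
    obtain ⟨hl, hLM⟩ := rep_t (l x) (l y) _ _ h.2
    have hlenx : (enc (fn (l x) x) ++ [fA]).length = 2 * (K * l x) + 1 := by
      simp [enc_len, hlen (l x) x rfl]
    have hleny : (enc (fn (l y) y) ++ [fA]).length = 2 * (K * l y) + 1 := by
      simp [enc_len, hlen (l y) y rfl]
    have heq : enc (fn (l x) x) ++ [fA] = enc (fn (l y) y) ++ [fA] := by
      apply hLM.eq_of_length
      rw [hlenx, hleny, hl]
    have henc : enc (fn (l x) x) = enc (fn (l y) y) := by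
      have := heq
      have hlen2 : (enc (fn (l x) x)).length = (enc (fn (l y) y)).length := by
        have := congrArg List.length heq
        simpa using this
      exact List.append_cancel_right heq
    have hfn : fn (l x) x = fn (l y) y := enc_inj _ _ henc
    rw [← hl] at hfn
    exact hinj (l x) x y rfl hl.symm hfn
  · intro g
    simp [enc_len, hlen (l g) g rfl]
    omega
  · intro g
    have h7 := hpos g
    simp [enc_len, hlen (l g) g rfl]
    ring_nf
    nlinarith
theorem rep_code (α : S → List (ULift.{u} Bool))
    (hhead : ∀ g, (α g).head? = some fA)
    (hlast : ∀ g, (α g).getLast? = some fA)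
    (hchain : ∀ g, (α g).Chain' (fun x y => x = fA ∨ y = fA))
    (hpf : ∀ g h : S, α g <+: α h → g = h) (g : S) :
    RepLen {ltr α fA, ltr α tA} (phi α hhead hlast hchain hpf g) (code α g).length := by
  refine ⟨(code α g).map (ltr α), ?_, ?_, by simp⟩
  · intro x hx
    obtain ⟨a, _, rfl⟩ := List.mem_map.1 hx
    obtain ⟨b⟩ := a
    cases b
    · exact Or.inl rfl
    · exact Or.inr rfl
  · rw [show code α g = tA :: (tA :: α g) from rfl, listProd_letters α tA (tA :: α g)]
    rfl

theorem lower_bound (α : S → List (ULift.{u} Bool)) (l : S → ℕ)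
    (hD1 : ∀ g h : S, l (g * h) ≤ l g + l h)
    (hlb : ∀ g, l g ≤ (α g).length + 2)
    (hhead : ∀ g, (α g).head? = some fA)
    (hlast : ∀ g, (α g).getLast? = some fA)
    (hchain : ∀ g, (α g).Chain' (fun x y => x = fA ∨ y = fA))
    (hpf : ∀ g h : S, α g <+: α h → g = h) (g : S) (n : ℕ)
    (hn : RepLen {ltr α fA, ltr α tA} (phi α hhead hlast hchain hpf g) n) :
    l g ≤ n := by
  obtain ⟨w, hmem, hprod, hlen⟩ := hn
  obtain ⟨u, rfl⟩ := mem_letters α w hmem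
  cases u with
  | nil => simp [listProd] at hprod
  | cons a u' =>
    rw [listProd_letters α a u'] at hprod
    have h1 : ((⟨a, u'⟩ : FreeSemigroup (ULift.{u} Bool)) : (rc α).Quotient)
        = ((⟨tA, tA :: α g⟩ : FreeSemigroup (ULift.{u} Bool)) : (rc α).Quotient) :=
      Option.some.inj hprod
    have h2 : run α (a :: u') = run α (code α g) := (Con.eq _).1 h1
    have h3 := congrFun h2 (some (none, []))
    rw [run_code hpf g none] at h3
    have h4 : apply' g (none : Option S) = g := by simp [apply']
    rw [h4] at h3
    have h5 := wt_run hD1 hlb (a :: u') (some (none, []))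
    rw [h3] at h5
    have h5' : l g ≤ u'.length + 1 := by simpa [wt] using h5
    have h6 : u'.length + 1 = n := by simpa using hlen
    omega

end S13
/-- any semigroup `S` with a function `l : S → ℕ` satisfying (D1) and (D2)
embeds into a semigroup `H` generated by a two-element set `B = {b₁, b₂}` so that the
restriction of `|·|_B` to `S` is equivalent to `l`. -/
theorem stmt13 {S : Type u} [Semigroup S] (l : S → ℕ) (hpos : ∀ g, 1 ≤ l g)
    (hD1 : ∀ g h : S, l (g * h) ≤ l g + l h)
    (hD2 : ∃ a : ℝ, 0 < a ∧ ∀ r : ℕ, {g : S | l g ≤ r}.Finite ∧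
      (({g : S | l g ≤ r}).ncard : ℝ) ≤ a ^ r) :
    ∃ (H : Type u) (iH : Semigroup H) (b₁ b₂ : H)
      (φ : @MulHom S H _ (@Semigroup.toMul H iH)),
      @Subsemigroup.closure H (@Semigroup.toMul H iH) {b₁, b₂} = ⊤ ∧
      Function.Injective φ ∧
      ∃ c₁ c₂ : ℝ, 0 < c₁ ∧ 0 < c₂ ∧
        ∀ g : S, c₁ * l g ≤ (@lenOf H iH {b₁, b₂} (φ g) : ℝ) ∧
          (@lenOf H iH {b₁, b₂} (φ g) : ℝ) ≤ c₂ * l g := by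
  obtain ⟨α, C, hC, hhead, hlast, hchain, hpf, hlb, hub⟩ := S13.exists_alpha l hpos hD2
  refine ⟨(S13.rc α).Quotient, inferInstance, S13.ltr α S13.fA, S13.ltr α S13.tA,
    S13.phi α hhead hlast hchain hpf, S13.closure_eq_top α,
    S13.phi_inj α hhead hlast hchain hpf, 1, C, one_pos, by exact_mod_cast hC, ?_⟩
  intro g
  have hrep := S13.rep_code α hhead hlast hchain hpf g
  have hne : {n | RepLen {S13.ltr α S13.fA, S13.ltr α S13.tA}
      (S13.phi α hhead hlast hchain hpf g) n}.Nonempty := ⟨(S13.code α g).length, hrep⟩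
  constructor
  · have hmem := Nat.sInf_mem hne
    have hlow := S13.lower_bound α l hD1 hlb hhead hlast hchain hpf g _ hmem
    rw [one_mul]
    unfold lenOf
    exact_mod_cast hlow
  · have hup : lenOf {S13.ltr α S13.fA, S13.ltr α S13.tA}
        (S13.phi α hhead hlast hchain hpf g) ≤ (S13.code α g).length :=
      Nat.sInf_le hrep
    have hcode_len : (S13.code α g).length = (α g).length + 2 := by simp [S13.code]
    have : lenOf {S13.ltr α S13.fA, S13.ltr α S13.tA}
        (S13.phi α hhead hlast hchain hpf g) ≤ C * l g := by
      rw [hcode_len] at hup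
      exact hup.trans (hub g)
    calc ((lenOf {S13.ltr α S13.fA, S13.ltr α S13.tA}
        (S13.phi α hhead hlast hchain hpf g) : ℕ) : ℝ) ≤ ((C * l g : ℕ) : ℝ) := by
          exact_mod_cast this
      _ = (C : ℝ) * l g := by push_cast; ring
end

section
/- For any semigroup S and any function l : S → ℕ satisfying (D1) l(gh) ≤ l(g)+l(h) and (D2) card{g ∈ S : l(g) ≤ r} ≤ a^r for some a > 0 and all r, there exists an embedding of S into a semigroup K with a finite generating set C such that |g|_C = l(g) exactly, for all g ∈ S. -/
set_option linter.unusedVariables false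
set_option linter.unusedSectionVars false
set_option linter.unreachableTactic false
set_option linter.unusedTactic false

universe u

namespace S14

/-! ### Letters -/

def Letter (k : ℕ) : Type u := ULift (Fin 4 × Fin k)

variable {k : ℕ}

def mkL (i : Fin 4) (j : Fin k) : Letter.{u} k := ⟨(i, j)⟩

def kind (x : Letter.{u} k) : Fin 4 := x.down.1

instance : Finite (Letter.{u} k) := by unfold Letter; infer_instance

@[simp] theorem kind_mkL (i : Fin 4) (j : Fin k) : kind (mkL.{u} i j) = i := rfl

theorem mkL_inj {i i' : Fin 4} {j j' : Fin k} (h : mkL.{u} i j = mkL i' j') :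
    i = i' ∧ j = j' := by
  have h2 := congrArg ULift.down h
  exact ⟨congrArg Prod.fst h2, congrArg Prod.snd h2⟩

def Shape (w : List (Letter.{u} k)) : Prop :=
  (∃ j, w = [mkL 0 j]) ∨
    ∃ b e mid, (∀ x ∈ mid, kind x = 2) ∧ w = mkL 1 b :: (mid ++ [mkL 3 e])

theorem shape_head {w : List (Letter.{u} k)} (hw : Shape w) :
    ∃ c r, w = c :: r ∧ (kind c = 0 ∨ kind c = 1) := by
  rcases hw with ⟨j, rfl⟩ | ⟨b, e, mid, _, rfl⟩
  · exact ⟨_, _, rfl, Or.inl rfl⟩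
  · exact ⟨_, _, rfl, Or.inr rfl⟩

theorem shape_start {w z v : List (Letter.{u} k)} {c : Letter.{u} k} (hw : Shape w)
    (hs : w = z ++ c :: v) (hc : kind c = 0 ∨ kind c = 1) : z = [] := by
  rcases hw with ⟨j, he⟩ | ⟨b, e, mid, hmid, he⟩
  · rw [he] at hs
    cases z with
    | nil => rfl
    | cons a z' =>
      have := congrArg List.length hs
      simp at this
  · rw [he] at hs
    cases z with
    | nil => rfl
    | cons a z' =>
      rw [List.cons_append] at hs
      injection hs with h1 h2
      have hcmem : c ∈ mid ++ [mkL 3 e] := by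
        rw [h2]; simp
      rcases List.mem_append.mp hcmem with h | h
      · have h3 := hmid c h
        rcases hc with hc | hc <;> rw [h3] at hc <;> exact absurd hc (by decide)
      · simp at h
        rw [h] at hc
        rcases hc with hc | hc <;> simp at hc <;> exact absurd hc (by decide)

theorem midE : ∀ (m m' : List (Letter.{u} k)) {e e' : Letter.{u} k}
    {s s' : List (Letter.{u} k)},
    (∀ x ∈ m, kind x = 2) → (∀ x ∈ m', kind x = 2) → kind e = 3 → kind e' = 3 →
    m ++ e :: s = m' ++ e' :: s' → m = m' ∧ e = e' ∧ s = s' := by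
  intro m
  induction m with
  | nil =>
    intro m' e e' s s' _ hm' he he' h
    cases m' with
    | nil =>
      injection h with h1 h2
      exact ⟨rfl, h1, h2⟩
    | cons a t =>
      rw [List.nil_append, List.cons_append] at h
      injection h with h1 _
      have := hm' a (by simp)
      rw [← h1, he] at this
      exact absurd this (by decide)
  | cons a t ih =>
    intro m' e e' s s' hm hm' he he' h
    cases m' with
    | nil =>
      rw [List.nil_append, List.cons_append] at h
      injection h with h1 _
      have := hm a (by simp)
      rw [h1, he'] at this
      exact absurd this (by decide)
    | cons a' t' =>
      rw [List.cons_append, List.cons_append] at h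
      injection h with h1 h2
      obtain ⟨e1, e2, e3⟩ := ih t' (fun x hx => hm x (by simp [hx]))
        (fun x hx => hm' x (by simp [hx])) he he' h2
      exact ⟨by rw [h1, e1], e2, e3⟩

theorem shape_append_eq {w w' u u' : List (Letter.{u} k)} (hw : Shape w) (hw' : Shape w')
    (h : w ++ u = w' ++ u') : w = w' ∧ u = u' := by
  rcases hw with ⟨j, rfl⟩ | ⟨b, e, mid, hmid, rfl⟩ <;>
    rcases hw' with ⟨j', rfl⟩ | ⟨b', e', mid', hmid', rfl⟩
  · rw [List.singleton_append, List.singleton_append] at h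
    injection h with h1 h2
    exact ⟨by rw [h1], h2⟩
  · rw [List.singleton_append, List.cons_append] at h
    injection h with h1 _
    exact absurd (mkL_inj h1).1 (by decide)
  · rw [List.singleton_append, List.cons_append] at h
    injection h with h1 _
    exact absurd (mkL_inj h1).1 (by decide)
  · rw [List.cons_append, List.cons_append] at h
    injection h with h1 h2
    rw [List.append_assoc, List.append_assoc, List.singleton_append,
      List.singleton_append] at h2
    obtain ⟨e1, e2, e3⟩ := midE mid mid' hmid hmid' (by simp) (by simp) h2
    refine ⟨by rw [h1, e1, e2], e3⟩


/-! ### part 2 -/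

variable {S : Type u} [Semigroup S]

structure GoodEnc (l : S → ℕ) (enc : S → List (Letter.{u} k)) : Prop where
  inj : Function.Injective enc
  len : ∀ g, (enc g).length = l g
  shape : ∀ g, Shape (enc g)

variable {l : S → ℕ} {enc : S → List (Letter.{u} k)}

theorem enc_append_eq (E : GoodEnc l enc) {g g' : S} {u u' : List (Letter.{u} k)}
    (h : enc g ++ u = enc g' ++ u') : g = g' ∧ u = u' := by
  obtain ⟨he, hu⟩ := shape_append_eq (E.shape g) (E.shape g') h
  exact ⟨E.inj he, hu⟩

def Red (enc : S → List (Letter.{u} k)) (a b : List (Letter.{u} k)) : Prop :=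
  ∃ (x y : List (Letter.{u} k)) (g h : S),
    a = x ++ (enc g ++ (enc h ++ y)) ∧ b = x ++ (enc (g * h) ++ y)

theorem core (E : GoodEnc l enc) {g₁ h₁ g₂ h₂ : S} {y₁ z y₂ : List (Letter.{u} k)}
    (H : enc g₁ ++ (enc h₁ ++ y₁) = z ++ (enc g₂ ++ (enc h₂ ++ y₂))) :
    (z = [] ∧ g₁ = g₂ ∧ h₁ = h₂ ∧ y₁ = y₂) ∨
    (z = enc g₁ ∧ h₁ = g₂ ∧ y₁ = enc h₂ ++ y₂) ∨
    (∃ y', z = enc g₁ ++ (enc h₁ ++ y') ∧ y₁ = y' ++ (enc g₂ ++ (enc h₂ ++ y₂))) := by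
  rcases List.append_eq_append_iff.mp H with ⟨a', ha1, ha2⟩ | ⟨c', hc1, hc2⟩
  · -- ha1 : z = enc g₁ ++ a', ha2 : enc h₁ ++ y₁ = a' ++ (enc g₂ ++ (enc h₂ ++ y₂))
    rcases List.append_eq_append_iff.mp ha2 with ⟨a'', hb1, hb2⟩ | ⟨c', hd1, hd2⟩
    · -- hb1 : a' = enc h₁ ++ a'', hb2 : y₁ = a'' ++ (...)
      right; right
      exact ⟨a'', by rw [ha1, hb1], hb2⟩
    · -- hd1 : enc h₁ = a' ++ c', hd2 : enc g₂ ++ (enc h₂ ++ y₂) = c' ++ y₁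
      rcases eq_or_ne c' [] with rfl | hne
      · rw [List.append_nil] at hd1
        rw [List.nil_append] at hd2
        right; right
        exact ⟨[], by rw [ha1, ← hd1, List.append_nil], by rw [← hd2, List.nil_append]⟩
      · obtain ⟨c, r, hg2, hck⟩ := shape_head (E.shape g₂)
        obtain ⟨t, rfl⟩ : ∃ t, c' = c :: t := by
          cases c' with
          | nil => exact absurd rfl hne
          | cons d t =>
            rw [hg2, List.cons_append, List.cons_append] at hd2
            injection hd2 with h1 _
            exact ⟨t, by rw [h1]⟩
        have ha0 : a' = [] := shape_start (E.shape h₁) hd1 hck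
        rw [ha0, List.nil_append] at hd1
        rw [← hd1] at hd2
        obtain ⟨e1, e2⟩ := enc_append_eq E hd2
        right; left
        exact ⟨by rw [ha1, ha0, List.append_nil], e1.symm, e2.symm⟩
  · -- hc1 : enc g₁ = z ++ c', hc2 : enc g₂ ++ (enc h₂ ++ y₂) = c' ++ (enc h₁ ++ y₁)
    rcases eq_or_ne c' [] with rfl | hne
    · rw [List.append_nil] at hc1
      rw [List.nil_append] at hc2
      obtain ⟨e1, e2⟩ := enc_append_eq E hc2
      right; left
      exact ⟨hc1.symm, e1.symm, e2.symm⟩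
    · obtain ⟨c, r, hg2, hck⟩ := shape_head (E.shape g₂)
      obtain ⟨t, rfl⟩ : ∃ t, c' = c :: t := by
        cases c' with
        | nil => exact absurd rfl hne
        | cons d t =>
          rw [hg2, List.cons_append, List.cons_append] at hc2
          injection hc2 with h1 _
          exact ⟨t, by rw [h1]⟩
      have hz : z = [] := shape_start (E.shape g₁) hc1 hck
      rw [hz, List.nil_append] at hc1
      rw [← hc1] at hc2
      obtain ⟨e1, e2⟩ := enc_append_eq E hc2
      obtain ⟨e3, e4⟩ := enc_append_eq E e2
      left
      exact ⟨hz, e1.symm, e3.symm, e4.symm⟩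

theorem red_confl_aux (E : GoodEnc l enc) {x₁ y₁ x₂ y₂ : List (Letter.{u} k)}
    {g₁ h₁ g₂ h₂ : S}
    (hx : x₁ ++ (enc g₁ ++ (enc h₁ ++ y₁)) = x₂ ++ (enc g₂ ++ (enc h₂ ++ y₂)))
    (hlen : x₁.length ≤ x₂.length) :
    x₁ ++ (enc (g₁ * h₁) ++ y₁) = x₂ ++ (enc (g₂ * h₂) ++ y₂) ∨
    ∃ d, Red enc (x₁ ++ (enc (g₁ * h₁) ++ y₁)) d ∧
      Red enc (x₂ ++ (enc (g₂ * h₂) ++ y₂)) d := by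
  obtain ⟨z, hz, hrest⟩ : ∃ z, x₂ = x₁ ++ z ∧
      enc g₁ ++ (enc h₁ ++ y₁) = z ++ (enc g₂ ++ (enc h₂ ++ y₂)) := by
    rcases List.append_eq_append_iff.mp hx with ⟨a', h1, h2⟩ | ⟨c', h1, h2⟩
    · exact ⟨a', h1, h2⟩
    · have hc : c' = [] := by
        have hl := congrArg List.length h1
        rw [List.length_append] at hl
        have : c'.length = 0 := by omega
        exact List.length_eq_zero_iff.mp this
      subst hc
      rw [List.append_nil] at h1
      subst h1
      rw [List.nil_append] at h2
      exact ⟨[], by rw [List.append_nil], by rw [List.nil_append]; exact h2.symm⟩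
  subst hz
  rcases core E hrest with ⟨hz0, rfl, rfl, rfl⟩ | ⟨hz0, rfl, hy⟩ | ⟨y', hz0, hy⟩
  · left; rw [hz0, List.append_nil]
  · right
    refine ⟨x₁ ++ (enc (g₁ * h₁ * h₂) ++ y₂), ⟨x₁, y₂, g₁ * h₁, h₂, by rw [hy], rfl⟩, ?_⟩
    refine ⟨x₁, y₂, g₁, h₁ * h₂, by rw [hz0]; simp [List.append_assoc], ?_⟩
    rw [mul_assoc]
  · right
    refine ⟨x₁ ++ (enc (g₁ * h₁) ++ (y' ++ (enc (g₂ * h₂) ++ y₂))),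
      ⟨x₁ ++ enc (g₁ * h₁) ++ y', y₂, g₂, h₂, by rw [hy]; simp [List.append_assoc],
        by simp [List.append_assoc]⟩,
      ⟨x₁, y' ++ (enc (g₂ * h₂) ++ y₂), g₁, h₁, by rw [hz0]; simp [List.append_assoc],
        by simp [List.append_assoc]⟩⟩

theorem red_confl (E : GoodEnc l enc) {a b c : List (Letter.{u} k)}
    (hab : Red enc a b) (hac : Red enc a c) :
    b = c ∨ ∃ d, Red enc b d ∧ Red enc c d := by
  obtain ⟨x₁, y₁, g₁, h₁, ha1, rfl⟩ := hab
  obtain ⟨x₂, y₂, g₂, h₂, ha2, rfl⟩ := hac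
  rcases le_total x₁.length x₂.length with hle | hle
  · exact red_confl_aux E (ha1.symm.trans ha2) hle
  · rcases red_confl_aux E (ha2.symm.trans ha1) hle with h | ⟨d, h1, h2⟩
    · exact Or.inl h.symm
    · exact Or.inr ⟨d, h2, h1⟩


/-! ### part 3 -/

def isStart (x : Letter.{u} k) : Bool := decide (kind x = 0 ∨ kind x = 1)

theorem countP_shape {w : List (Letter.{u} k)} (hw : Shape w) :
    w.countP isStart = 1 := by
  rcases hw with ⟨j, rfl⟩ | ⟨b, e, mid, hmid, rfl⟩
  · simp [List.countP_cons, isStart]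
  · rw [List.countP_cons, List.countP_append, List.countP_cons]
    have h1 : mid.countP isStart = 0 := by
      rw [List.countP_eq_zero]
      intro x hx
      simp [isStart, hmid x hx]
    have h2 : isStart (mkL (k := k) 1 b) = true := by simp [isStart]
    have h3 : isStart (mkL (k := k) 3 e) = false := by simp [isStart]
    rw [h1, h2, h3]
    simp

theorem red_not_enc (E : GoodEnc l enc) {g : S} {b : List (Letter.{u} k)} :
    ¬ Red enc (enc g) b := by
  rintro ⟨x, y, g', h', ha, -⟩
  have h1 : (enc g).countP isStart = 1 := countP_shape (E.shape g)
  rw [ha] at h1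
  rw [List.countP_append, List.countP_append, List.countP_append,
    countP_shape (E.shape g'), countP_shape (E.shape h')] at h1
  omega

theorem rtg_from_enc (E : GoodEnc l enc) {g : S} {d : List (Letter.{u} k)}
    (h : Relation.ReflTransGen (Red enc) (enc g) d) : d = enc g := by
  rcases Relation.ReflTransGen.cases_head h with rfl | ⟨c, hstep, -⟩
  · rfl
  · exact absurd hstep (red_not_enc E)

theorem red_length (E : GoodEnc l enc) (hD1 : ∀ g h : S, l (g * h) ≤ l g + l h)
    {a b : List (Letter.{u} k)} (h : Red enc a b) : b.length ≤ a.length := by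
  obtain ⟨x, y, g, h', rfl, rfl⟩ := h
  simp only [List.length_append, E.len]
  have := hD1 g h'
  omega

theorem rtg_length (E : GoodEnc l enc) (hD1 : ∀ g h : S, l (g * h) ≤ l g + l h)
    {a b : List (Letter.{u} k)} (h : Relation.ReflTransGen (Red enc) a b) :
    b.length ≤ a.length := by
  induction h with
  | refl => exact le_refl _
  | tail _ hstep ih => exact le_trans (red_length E hD1 hstep) ih

theorem red_append_right {a b : List (Letter.{u} k)} (h : Red enc a b)
    (v : List (Letter.{u} k)) : Red enc (a ++ v) (b ++ v) := by
  obtain ⟨x, y, g, h', rfl, rfl⟩ := h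
  exact ⟨x, y ++ v, g, h', by simp [List.append_assoc], by simp [List.append_assoc]⟩

theorem red_append_left {a b : List (Letter.{u} k)} (v : List (Letter.{u} k))
    (h : Red enc a b) : Red enc (v ++ a) (v ++ b) := by
  obtain ⟨x, y, g, h', rfl, rfl⟩ := h
  exact ⟨v ++ x, y, g, h', by simp [List.append_assoc], by simp [List.append_assoc]⟩

def JRel (enc : S → List (Letter.{u} k)) : List (Letter.{u} k) → List (Letter.{u} k) → Prop :=
  Relation.Join (Relation.ReflTransGen (Red enc))

theorem jrel_equiv (E : GoodEnc l enc) : Equivalence (JRel enc) := by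
  apply Relation.equivalence_join_reflTransGen
  intro a b c hab hac
  rcases red_confl E hab hac with rfl | ⟨d, h1, h2⟩
  · exact ⟨b, Relation.ReflGen.refl, Relation.ReflTransGen.refl⟩
  · exact ⟨d, Relation.ReflGen.single h1, Relation.ReflTransGen.single h2⟩

theorem jrel_mul (E : GoodEnc l enc) {a a' b b' : List (Letter.{u} k)}
    (h1 : JRel enc a a') (h2 : JRel enc b b') : JRel enc (a ++ b) (a' ++ b') := by
  obtain ⟨c, hac, hac'⟩ := h1
  obtain ⟨d, hbd, hbd'⟩ := h2
  have s1 : JRel enc (a ++ b) (a' ++ b) :=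
    ⟨c ++ b, Relation.ReflTransGen.lift (p := Red enc) (· ++ b) (fun _ _ h => red_append_right h b) _ _ hac,
      Relation.ReflTransGen.lift (p := Red enc) (· ++ b) (fun _ _ h => red_append_right h b) _ _ hac'⟩
  have s2 : JRel enc (a' ++ b) (a' ++ b') :=
    ⟨a' ++ d, Relation.ReflTransGen.lift (p := Red enc) (a' ++ ·) (fun _ _ h => red_append_left a' h) _ _ hbd,
      Relation.ReflTransGen.lift (p := Red enc) (a' ++ ·) (fun _ _ h => red_append_left a' h) _ _ hbd'⟩
  exact (jrel_equiv E).trans s1 s2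

def st (E : GoodEnc l enc) : Setoid (List (Letter.{u} k)) := ⟨JRel enc, jrel_equiv E⟩

def K0 (E : GoodEnc l enc) : Type u := Quotient (st E)

def K0.mk (E : GoodEnc l enc) (w : List (Letter.{u} k)) : K0 E := Quotient.mk (st E) w

def sem (E : GoodEnc l enc) : Semigroup (K0 E) where
  mul x y := Quotient.liftOn₂ x y (fun a b => K0.mk E (a ++ b))
    (fun _ _ _ _ ha hb => Quotient.sound (jrel_mul E ha hb))
  mul_assoc x y z := by
    refine Quotient.inductionOn₃ x y z fun a b c => ?_
    show K0.mk E (a ++ b ++ c) = K0.mk E (a ++ (b ++ c))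
    rw [List.append_assoc]

theorem K0.mk_mul (E : GoodEnc l enc) (a b : List (Letter.{u} k)) :
    (sem E).toMul.mul (K0.mk E a) (K0.mk E b) = K0.mk E (a ++ b) := rfl

theorem K0.exact (E : GoodEnc l enc) {a b : List (Letter.{u} k)}
    (h : K0.mk E a = K0.mk E b) : JRel enc a b := Quotient.exact h


/-! ### part 4 : existence of a good encoding -/

theorem exists_enc (l : S → ℕ) (hpos : ∀ g, 1 ≤ l g)
    (hD2 : ∃ a : ℝ, 0 < a ∧ ∀ r : ℕ, {g : S | l g ≤ r}.Finite ∧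
      (({g : S | l g ≤ r}).ncard : ℝ) ≤ a ^ r) :
    ∃ (k : ℕ) (enc : S → List (Letter.{u} k)), GoodEnc l enc := by
  classical
  obtain ⟨a, ha, hbound⟩ := hD2
  set k : ℕ := max 1 ⌈a⌉₊ with hk
  have hak : a ≤ (k : ℝ) := le_trans (Nat.le_ceil a) (by exact_mod_cast le_max_right 1 ⌈a⌉₊)
  have hfin : ∀ n : ℕ, {g : S | l g = n}.Finite := fun n =>
    (hbound n).1.subset (fun g hg => le_of_eq hg)
  have hcard : ∀ n : ℕ, Nat.card {g : S // l g = n} ≤ k ^ n := by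
    intro n
    have h1 : Nat.card {g : S // l g = n} = ({g : S | l g = n}).ncard :=
      Nat.card_coe_set_eq _
    have h2 : ({g : S | l g = n}).ncard ≤ ({g : S | l g ≤ n}).ncard :=
      Set.ncard_le_ncard (fun g hg => le_of_eq hg) (hbound n).1
    have h3 : (({g : S | l g ≤ n}).ncard : ℝ) ≤ a ^ n := (hbound n).2
    have h4 : a ^ n ≤ (k : ℝ) ^ n := pow_le_pow_left₀ ha.le hak n
    have h5 : ((k : ℝ)) ^ n = ((k ^ n : ℕ) : ℝ) := by push_cast; ring
    have : (({g : S | l g = n}).ncard : ℝ) ≤ ((k ^ n : ℕ) : ℝ) := by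
      calc (({g : S | l g = n}).ncard : ℝ) ≤ (({g : S | l g ≤ n}).ncard : ℝ) := by
            exact_mod_cast h2
        _ ≤ a ^ n := h3
        _ ≤ (k : ℝ) ^ n := h4
        _ = _ := h5
    rw [h1]
    exact_mod_cast this
  have hFin : ∀ n : ℕ, Finite {g : S // l g = n} := fun n => (hfin n).to_subtype
  -- embedding for length-1 elements
  have he1 : Nonempty ({g : S // l g = 1} ↪ Fin k) := by
    haveI := hFin 1
    haveI := Fintype.ofFinite {g : S // l g = 1}
    apply Function.Embedding.nonempty_of_card_le
    rw [Fintype.card_fin, ← Nat.card_eq_fintype_card]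
    simpa using hcard 1
  obtain ⟨e1⟩ := he1
  -- embeddings for length-(n+2) elements
  have heN : ∀ n : ℕ, Nonempty ({g : S // l g = n + 2} ↪ Fin k × (Fin n → Fin k) × Fin k) := by
    intro n
    haveI := hFin (n + 2)
    haveI := Fintype.ofFinite {g : S // l g = n + 2}
    apply Function.Embedding.nonempty_of_card_le
    have hct : Fintype.card (Fin k × (Fin n → Fin k) × Fin k) = k ^ (n + 2) := by
      simp [Fintype.card_fun]
      ring
    rw [hct, ← Nat.card_eq_fintype_card]
    exact hcard (n + 2)
  have embN : ∀ n : ℕ, ({g : S // l g = n + 2} ↪ Fin k × (Fin n → Fin k) × Fin k) :=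
    fun n => (heN n).some
  have aux : ∀ (n n' : ℕ) (x : {g : S // l g = n + 2}) (x' : {g : S // l g = n' + 2}),
      (mkL 1 (embN n x).1 ::
        ((List.ofFn fun i => mkL 2 ((embN n x).2.1 i)) ++ [mkL 3 (embN n x).2.2]))
      = (mkL 1 (embN n' x').1 ::
        ((List.ofFn fun i => mkL 2 ((embN n' x').2.1 i)) ++ [mkL 3 (embN n' x').2.2])) →
      x.val = x'.val := by
    intro n n' x x' heq
    have hnn : n = n' := by
      have := congrArg List.length heq
      simp at this
      omega
    subst hnn
    injection heq with h1 h2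
    have hb := (mkL_inj h1).2
    obtain ⟨h3, h4⟩ := List.append_inj h2 (by simp)
    have hmid : ∀ i, (embN n x).2.1 i = (embN n x').2.1 i := by
      intro i
      have h5 := congrFun (List.ofFn_injective h3) i
      exact (mkL_inj h5).2
    have he : (embN n x).2.2 = (embN n x').2.2 := by
      injection h4 with h5 _
      exact (mkL_inj h5).2
    have hemb : embN n x = embN n x' := by
      apply Prod.ext hb
      apply Prod.ext
      · exact funext hmid
      · exact he
    exact congrArg Subtype.val ((embN n).injective hemb)
  refine ⟨k, fun g =>
    if h : l g = 1 then [mkL 0 (e1 ⟨g, h⟩)]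
    else
      mkL 1 (embN (l g - 2) ⟨g, by have := hpos g; omega⟩).1 ::
        ((List.ofFn fun i => mkL 2 ((embN (l g - 2) ⟨g, by have := hpos g; omega⟩).2.1 i)) ++
          [mkL 3 (embN (l g - 2) ⟨g, by have := hpos g; omega⟩).2.2]), ?_, ?_, ?_⟩
  · -- injectivity
    intro g g' heq
    by_cases h : l g = 1 <;> by_cases h' : l g' = 1 <;>
      simp only [h, h', dif_pos, dif_neg, not_false_iff] at heq
    · injection heq with h1 _
      have := (mkL_inj h1).2
      have h2 : (⟨g, h⟩ : {g : S // l g = 1}) = ⟨g', h'⟩ := e1.injective this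
      exact congrArg Subtype.val h2
    · injection heq with h1 _
      exact absurd (mkL_inj h1).1 (by decide)
    · injection heq with h1 _
      exact absurd (mkL_inj h1).1 (by decide)
    · exact aux _ _ _ _ heq
  · -- length
    intro g
    by_cases h : l g = 1
    · simp [h]
    · have := hpos g
      simp only [h, dif_neg, not_false_iff]
      simp [List.length_ofFn]
      omega
  · -- shape
    intro g
    by_cases h : l g = 1
    · exact Or.inl ⟨e1 ⟨g, h⟩, by simp [h]⟩
    · refine Or.inr ⟨(embN (l g - 2) ⟨g, by have := hpos g; omega⟩).1,
        (embN (l g - 2) ⟨g, by have := hpos g; omega⟩).2.2,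
        List.ofFn fun i => mkL 2 ((embN (l g - 2) ⟨g, by have := hpos g; omega⟩).2.1 i),
        ?_, by simp [h]⟩
      intro x hx
      simp only [List.mem_ofFn] at hx
      obtain ⟨i, rfl⟩ := hx
      rfl


end S14

/-! ### part5 : main theorem -/

/-- any semigroup `S` with a function `l : S → ℕ` satisfying (D1) and (D2)
embeds into a semigroup `K` with a finite generating set `C` so that `|g|_C = l(g)` exactly. -/
theorem stmt14 {S : Type u} [Semigroup S] (l : S → ℕ) (hpos : ∀ g, 1 ≤ l g)
    (hD1 : ∀ g h : S, l (g * h) ≤ l g + l h)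
    (hD2 : ∃ a : ℝ, 0 < a ∧ ∀ r : ℕ, {g : S | l g ≤ r}.Finite ∧
      (({g : S | l g ≤ r}).ncard : ℝ) ≤ a ^ r) :
    ∃ (K : Type u) (iK : Semigroup K) (C : Set K)
      (φ : @MulHom S K _ (@Semigroup.toMul K iK)),
      C.Finite ∧
      @Subsemigroup.closure K (@Semigroup.toMul K iK) C = ⊤ ∧
      Function.Injective φ ∧
      ∀ g : S, @lenOf K iK C (φ g) = l g := by
  classical
  obtain ⟨k, enc, E⟩ := S14.exists_enc l hpos hD2
  letI iK0 : Semigroup (S14.K0 E) := S14.sem E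
  set C0 : Set (S14.K0 E) :=
    Set.range (fun s : S14.Letter.{u} k => S14.K0.mk E [s]) with hC0
  have hmk_mul : ∀ a b : List (S14.Letter.{u} k),
      S14.K0.mk E a * S14.K0.mk E b = S14.K0.mk E (a ++ b) := fun _ _ => rfl
  have hmem : ∀ (c : S14.Letter.{u} k) (r : List (S14.Letter.{u} k)),
      S14.K0.mk E (c :: r) ∈ Subsemigroup.closure C0 := by
    intro c r
    induction r generalizing c with
    | nil => exact Subsemigroup.subset_closure ⟨c, rfl⟩
    | cons c' r' ih =>
      have h : S14.K0.mk E (c :: c' :: r') = S14.K0.mk E [c] * S14.K0.mk E (c' :: r') := rfl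
      rw [h]
      exact mul_mem (Subsemigroup.subset_closure ⟨c, rfl⟩) (ih c')
  have hene : ∀ g : S, ∃ c r, enc g = c :: r := by
    intro g
    cases hce : enc g with
    | nil =>
      exfalso
      have h1 := E.len g
      rw [hce] at h1
      simp at h1
      have := hpos g
      omega
    | cons c r => exact ⟨c, r, rfl⟩
  have hmemenc : ∀ g : S, S14.K0.mk E (enc g) ∈ Subsemigroup.closure C0 := by
    intro g
    obtain ⟨c, r, hcr⟩ := hene g
    rw [hcr]
    exact hmem c r
  have hredgh : ∀ g h : S, S14.Red enc (enc g ++ enc h) (enc (g * h)) := by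
    intro g h
    exact ⟨[], [], g, h, by simp, by simp⟩
  have hjrelgh : ∀ g h : S, S14.JRel enc (enc (g * h)) (enc g ++ enc h) :=
    fun g h => ⟨enc (g * h), Relation.ReflTransGen.refl,
      Relation.ReflTransGen.single (hredgh g h)⟩
  refine ⟨↥(Subsemigroup.closure C0), inferInstance, Subtype.val ⁻¹' C0,
    ⟨fun g => ⟨S14.K0.mk E (enc g), hmemenc g⟩, ?_⟩, ?_, ?_, ?_, ?_⟩
  · -- hom
    intro g h
    apply Subtype.ext
    show S14.K0.mk E (enc (g * h)) = S14.K0.mk E (enc g) * S14.K0.mk E (enc h)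
    rw [hmk_mul]
    exact Quotient.sound (hjrelgh g h)
  · -- finite
    exact Set.Finite.preimage (Set.injOn_of_injective Subtype.val_injective)
      (Set.finite_range _)
  · -- closure top
    exact Subsemigroup.closure_closure_coe_preimage
  · -- injective
    intro g g' h
    have h1 : S14.K0.mk E (enc g) = S14.K0.mk E (enc g') := congrArg Subtype.val h
    have h2 : S14.JRel enc (enc g) (enc g') := Quotient.exact h1
    obtain ⟨d, hd1, hd2⟩ := h2
    have e1 := S14.rtg_from_enc E hd1
    have e2 := S14.rtg_from_enc E hd2
    exact E.inj (e1.symm.trans e2)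
  · -- lenOf
    intro g
    set K := ↥(Subsemigroup.closure C0)
    set C : Set K := Subtype.val ⁻¹' C0 with hC
    set φg : K := ⟨S14.K0.mk E (enc g), hmemenc g⟩ with hφg
    have coe_foldl : ∀ (t : List K) (x : K),
        ((t.foldl (· * ·) x : K) : S14.K0 E)
          = (t.map Subtype.val).foldl (· * ·) (x : S14.K0 E) := by
      intro t
      induction t with
      | nil => intro x; rfl
      | cons z t' ih =>
        intro x
        rw [List.foldl_cons, List.map_cons, List.foldl_cons, ih]
        rfl
    have foldl_mk : ∀ (r : List (S14.Letter.{u} k)) (w : List (S14.Letter.{u} k)),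
        (r.map fun s => S14.K0.mk E [s]).foldl (· * ·) (S14.K0.mk E w)
          = S14.K0.mk E (w ++ r) := by
      intro r
      induction r with
      | nil => intro w; simp
      | cons s r' ih =>
        intro w
        rw [List.map_cons, List.foldl_cons, hmk_mul, ih]
        simp
    have hup : RepLen C φg (l g) := by
      set f : S14.Letter.{u} k → K :=
        fun s => ⟨S14.K0.mk E [s], Subsemigroup.subset_closure ⟨s, rfl⟩⟩ with hf
      refine ⟨(enc g).map f, ?_, ?_, by simp [E.len g]⟩
      · intro x hx
        obtain ⟨s, _, rfl⟩ := List.mem_map.mp hx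
        exact ⟨s, rfl⟩
      · obtain ⟨c, r, hcr⟩ := hene g
        rw [hcr, List.map_cons]
        show some ((List.map f r).foldl (· * ·) (f c)) = some φg
        congr 1
        apply Subtype.ext
        rw [coe_foldl, List.map_map]
        have hcomp : (Subtype.val ∘ f) = fun s => S14.K0.mk E [s] := rfl
        rw [hcomp, foldl_mk]
        show S14.K0.mk E ([c] ++ r) = (φg : S14.K0 E)
        rw [hφg]
        simp [hcr]
    have hlow : ∀ n, RepLen C φg n → l g ≤ n := by
      intro n hn
      obtain ⟨w, hwC, hwP, hwL⟩ := hn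
      cases w with
      | nil => simp [listProd] at hwP
      | cons x t =>
        have hfold : (t.foldl (· * ·) x) = φg := by
          have := hwP
          simp only [listProd, Option.some.injEq] at this
          exact this
        have claim : ∀ (t' : List K), (∀ z ∈ t', z ∈ C) → ∀ (x' : K)
            (Lx : List (S14.Letter.{u} k)), (x' : S14.K0 E) = S14.K0.mk E Lx →
            ∃ L : List (S14.Letter.{u} k), S14.K0.mk E L = ((t'.foldl (· * ·) x' : K) : S14.K0 E)
              ∧ L.length = Lx.length + t'.length := by
          intro t'
          induction t' with
          | nil =>
            intro _ x' Lx hx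
            exact ⟨Lx, hx.symm, by simp⟩
          | cons z t'' ih =>
            intro hC' x' Lx hx
            obtain ⟨s, hs⟩ := hC' z (by simp)
            have hx2 : ((x' * z : K) : S14.K0 E) = S14.K0.mk E (Lx ++ [s]) := by
              show ((x' : S14.K0 E) * (z : S14.K0 E)) = _
              rw [hx, ← hs, hmk_mul]
            obtain ⟨L, hL1, hL2⟩ := ih (fun y hy => hC' y (by simp [hy])) (x' * z) (Lx ++ [s]) hx2
            refine ⟨L, ?_, by simp at hL2 ⊢; omega⟩
            rw [hL1]
            rfl
        obtain ⟨s0, hs0⟩ := hwC x (by simp)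
        obtain ⟨L, hL1, hL2⟩ := claim t (fun z hz => hwC z (by simp [hz])) x [s0] hs0.symm
        rw [hfold, hφg] at hL1
        have hj : S14.JRel enc L (enc g) := Quotient.exact hL1
        obtain ⟨d, hd1, hd2⟩ := hj
        have hde : d = enc g := S14.rtg_from_enc E hd2
        rw [hde] at hd1
        have hlen := S14.rtg_length E hD1 hd1
        rw [E.len g] at hlen
        simp at hwL hL2
        omega
    have hne : {n | RepLen C φg n}.Nonempty := ⟨l g, hup⟩
    exact le_antisymm (Nat.sInf_le hup) (le_csInf hne hlow)
end

section
/- Let l : ℕ → ℕ satisfy (C1) l(i+j) ≤ l(i) + l(j) for all i, j ≥ 1, and (C2) there exists a > 0 with card{i ∈ ℕ : l(i) ≤ r} ≤ a^r for all r ∈ ℕ. Then there exists a 2-generated semigroup H and an element h ∈ H such that the function i ↦ |h^i|_H is equivalent to l, i.e., there are constants c₁, c₂ > 0 with c₁ l(i) ≤ |h^i|_H ≤ c₂ l(i) for all i ≥ 1. -/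
/-- `pow1 g n = g^(n+1)`: positive powers of an element of a semigroup. -/
def pow1 {M : Type*} [Semigroup M] (g : M) : ℕ → M
  | 0 => g
  | n + 1 => pow1 g n * g

namespace S16

abbrev Xst : Type := Option (ℕ × List Bool)

def MM : Type := Xst → Xst

instance : Semigroup MM where
  mul f g := fun s => g (f s)
  mul_assoc _ _ _ := rfl

lemma MM.mul_def (f g : MM) (s : Xst) : (f * g) s = g (f s) := rfl

def pairsL : List Bool → List Bool
  | [] => []
  | b :: d => false :: b :: pairsL d

@[simp] lemma pairsL_nil : pairsL [] = [] := rfl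
@[simp] lemma pairsL_cons (b : Bool) (d : List Bool) :
    pairsL (b :: d) = false :: b :: pairsL d := rfl

lemma pairsL_append (d e : List Bool) : pairsL (d ++ e) = pairsL d ++ pairsL e := by
  induction d with
  | nil => rfl
  | cons b d ih => simp [pairsL, ih]

@[simp] lemma pairsL_length (d : List Bool) : (pairsL d).length = 2 * d.length := by
  induction d with
  | nil => rfl
  | cons b d ih => simp [pairsL, ih]; omega

lemma pairsL_eq_nil {d : List Bool} (h : pairsL d = []) : d = [] := by
  cases d with
  | nil => rfl
  | cons b d => simp [pairsL] at h

lemma pairsL_inj : ∀ {d e : List Bool}, pairsL d = pairsL e → d = e := by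
  intro d
  induction d with
  | nil => intro e h; exact (pairsL_eq_nil h.symm).symm
  | cons b d ih =>
    intro e h
    cases e with
    | nil => simp [pairsL] at h
    | cons b' e' =>
      simp only [pairsL_cons, List.cons.injEq] at h
      obtain ⟨-, hb, he⟩ := h
      rw [hb, ih he]

lemma pairsL_no_TT : ∀ (d q q' : List Bool), q ++ true :: true :: q' = pairsL d → False := by
  intro d
  induction d with
  | nil => intro q q' h; rcases q <;> simp [pairsL] at h
  | cons b d ih =>
    intro q q' h
    simp only [pairsL_cons] at h
    match q, h with
    | [], h => simp at h
    | [x], h =>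
      simp only [List.cons_append, List.nil_append, List.cons.injEq] at h
      obtain ⟨-, hb, ht⟩ := h
      cases d with
      | nil => simp [pairsL] at ht
      | cons c d' => simp [pairsL] at ht
    | x :: y :: q₂, h =>
      simp only [List.cons_append, List.cons.injEq] at h
      exact ih q₂ q' h.2.2


variable (c : ℕ → List Bool)

def codeW (j : ℕ) : List Bool := true :: true :: pairsL (c j)

/-- code validity hypotheses -/
structure CodeOK : Prop where
  ne : ∀ j, 1 ≤ j → c j ≠ []
  pf : ∀ m j, 1 ≤ m → 1 ≤ j → c m <+: c j → m = j

open Classical in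
noncomputable def step (x : Bool) : Xst → Xst
  | none => none
  | some (n, p) =>
    if h : ∃ j, 1 ≤ j ∧ p ++ [x] = codeW c j then some (n + h.choose, [])
    else if ∃ m, 1 ≤ m ∧ (p ++ [x]) <+: codeW c m then some (n, p ++ [x]) else none

@[simp] lemma step_none (x : Bool) : step c x none = none := rfl

noncomputable def run (w : List Bool) (s : Xst) : Xst :=
  w.foldl (fun s x => step c x s) s

@[simp] lemma run_nil (s : Xst) : run c [] s = s := rfl

@[simp] lemma run_cons (b : Bool) (w : List Bool) (s : Xst) :
    run c (b :: w) s = run c w (step c b s) := rfl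

lemma run_append (v w : List Bool) (s : Xst) :
    run c (v ++ w) s = run c w (run c v s) := List.foldl_append

@[simp] lemma run_none (w : List Bool) : run c w none = none := by
  induction w with
  | nil => rfl
  | cons b w ih => simp [ih]

noncomputable def mmOf (w : List Bool) : MM := fun s => run c w s

def sig (j : ℕ) : MM := fun s =>
  match s with
  | some (n, []) => some (n + j, [])
  | _ => none

lemma sig_mul (i j : ℕ) : sig i * sig j = sig (i + j) := by
  funext s
  rcases s with _ | ⟨n, _ | ⟨b, p⟩⟩ <;> simp [MM.mul_def, sig] <;> omega

lemma codeW_inj (hok : CodeOK c) {m j : ℕ} (hm : 1 ≤ m) (hj : 1 ≤ j)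
    (h : codeW c m = codeW c j) : m = j := by
  simp only [codeW, List.cons.injEq] at h
  exact hok.pf m j hm hj (pairsL_inj h.2.2 ▸ List.prefix_refl _)

lemma codeW_len (j : ℕ) : (codeW c j).length = 2 + 2 * (c j).length := by
  simp [codeW]; omega

/-- "TT" occurs only at the start of a code word. -/
lemma no_TT (hok : CodeOK c) {m : ℕ} (hm : 1 ≤ m) (q q' : List Bool)
    (h : q ++ true :: true :: q' = codeW c m) : q = [] := by
  match q, h with
  | [], _ => rfl
  | [x], h =>
    exfalso
    simp only [codeW, List.cons_append, List.nil_append, List.cons.injEq] at h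
    obtain ⟨-, -, ht⟩ := h
    obtain ⟨b, d, hcd⟩ : ∃ b d, c m = b :: d := by
      rcases hcm : c m with _ | ⟨b, d⟩
      · exact absurd hcm (hok.ne m hm)
      · exact ⟨b, d, rfl⟩
    rw [hcd] at ht
    simp [pairsL] at ht
  | x :: y :: q₂, h =>
    exfalso
    simp only [codeW, List.cons_append, List.cons.injEq] at h
    exact pairsL_no_TT (c m) q₂ q' h.2.2

/-- step on a state with a pending that completes a code word -/
lemma step_code (hok : CodeOK c) {j : ℕ} (hj : 1 ≤ j) (x : Bool) (n : ℕ) (p : List Bool)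
    (h : p ++ [x] = codeW c j) : step c x (some (n, p)) = some (n + j, []) := by
  have hex : ∃ j', 1 ≤ j' ∧ p ++ [x] = codeW c j' := ⟨j, hj, h⟩
  simp only [step, dif_pos hex]
  have hspec := hex.choose_spec
  have : hex.choose = j := codeW_inj c hok hspec.1 hj (hspec.2.symm.trans h)
  rw [this]

lemma step_prefix (x : Bool) (n : ℕ) (p : List Bool)
    (hnc : ¬ ∃ j, 1 ≤ j ∧ p ++ [x] = codeW c j)
    (hpre : ∃ m, 1 ≤ m ∧ (p ++ [x]) <+: codeW c m) :
    step c x (some (n, p)) = some (n, p ++ [x]) := by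
  simp only [step, dif_neg hnc, if_pos hpre]

lemma step_dead (x : Bool) (n : ℕ) (p : List Bool)
    (hnc : ¬ ∃ j, 1 ≤ j ∧ p ++ [x] = codeW c j)
    (hpre : ¬ ∃ m, 1 ≤ m ∧ (p ++ [x]) <+: codeW c m) :
    step c x (some (n, p)) = none := by
  simp only [step, dif_neg hnc, if_neg hpre]


lemma step_T_empty (hok : CodeOK c) {j : ℕ} (hj : 1 ≤ j) (n : ℕ) :
    step c true (some (n, ([] : List Bool))) = some (n, [true]) := by
  have h1 : ¬ ∃ j', 1 ≤ j' ∧ ([] : List Bool) ++ [true] = codeW c j' := by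
    rintro ⟨j', -, h⟩; simp [codeW] at h
  have h2 : ∃ m, 1 ≤ m ∧ (([] : List Bool) ++ [true]) <+: codeW c m :=
    ⟨j, hj, ⟨true :: pairsL (c j), rfl⟩⟩
  simpa using step_prefix c true n [] h1 h2

lemma step_T_T (hok : CodeOK c) {j : ℕ} (hj : 1 ≤ j) (n : ℕ) :
    step c true (some (n, [true])) = some (n, [true, true]) := by
  have h1 : ¬ ∃ j', 1 ≤ j' ∧ [true] ++ [true] = codeW c j' := by
    rintro ⟨j', hj', h⟩
    simp only [codeW, List.cons_append, List.nil_append, List.cons.injEq] at h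
    exact hok.ne j' hj' (pairsL_eq_nil h.2.2.symm)
  have h2 : ∃ m, 1 ≤ m ∧ ([true] ++ [true]) <+: codeW c m :=
    ⟨j, hj, ⟨pairsL (c j), rfl⟩⟩
  simpa using step_prefix c true n [true] h1 h2

lemma run_pairs (hok : CodeOK c) {j : ℕ} (hj : 1 ≤ j) :
    ∀ (rest d : List Bool), d ++ rest = c j → rest ≠ [] → ∀ n : ℕ,
      run c (pairsL rest) (some (n, true :: true :: pairsL d)) = some (n + j, []) := by
  intro rest
  induction rest with
  | nil => intro d _ hne; exact absurd rfl hne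
  | cons b rest' ih =>
    intro d hd _ n
    -- first letter: false
    have hstepF : step c false (some (n, true :: true :: pairsL d))
        = some (n, (true :: true :: pairsL d) ++ [false]) := by
      apply step_prefix
      · rintro ⟨m, -, h⟩
        have := congrArg List.length h
        simp [codeW] at this
        omega
      · refine ⟨j, hj, ⟨b :: pairsL rest', ?_⟩⟩
        simp only [codeW, ← hd, pairsL_append, pairsL_cons]
        simp
    have hpend : ((true :: true :: pairsL d) ++ [false]) ++ [b]
        = true :: true :: pairsL (d ++ [b]) := by
      simp [pairsL_append, pairsL]
    cases rest' with
    | nil =>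
      -- base case: this is the last pair, completing the code word
      have hcj : d ++ [b] = c j := by simpa using hd
      have hstepb : step c b (some (n, (true :: true :: pairsL d) ++ [false]))
          = some (n + j, []) := by
        apply step_code c hok hj
        rw [hpend, hcj]; rfl
      simp only [pairsL_cons, pairsL_nil, run_cons, hstepF, hstepb, run_nil]
    | cons b' rest'' =>
      have hpend' : (true :: true :: (pairsL d ++ [false])) ++ [b]
          = true :: true :: pairsL (d ++ [b]) := by simpa using hpend
      have hstepb : step c b (some (n, true :: true :: (pairsL d ++ [false])))
          = some (n, true :: true :: pairsL (d ++ [b])) := by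
        rw [← hpend']
        apply step_prefix
        · rintro ⟨m, hm, h⟩
          rw [hpend'] at h
          simp only [codeW, List.cons.injEq] at h
          have hcm : c m = d ++ [b] := pairsL_inj h.2.2.symm
          have hpre : c m <+: c j := by
            rw [hcm, ← hd]
            exact ⟨b' :: rest'', by simp⟩
          have := hok.pf m j hm hj hpre
          rw [this] at hcm
          have := congrArg List.length hcm
          rw [← hd] at this
          simp at this
        · refine ⟨j, hj, ⟨pairsL (b' :: rest''), ?_⟩⟩
          rw [hpend']
          simp only [codeW, ← hd, pairsL_append]
          simp [pairsL_append]
      have : run c (pairsL (b :: b' :: rest'')) (some (n, true :: true :: pairsL d))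
          = run c (pairsL (b' :: rest'')) (some (n, true :: true :: pairsL (d ++ [b]))) := by
        simp only [pairsL_cons (b := b), run_cons, hstepF]
        rw [show (true :: true :: pairsL d) ++ [false] = true :: true :: (pairsL d ++ [false]) by simp] at *
        simp only [hstepb]
      rw [this]
      exact ih (d ++ [b]) (by simpa using hd) (by simp) n

lemma run_code_clean (hok : CodeOK c) {j : ℕ} (hj : 1 ≤ j) (n : ℕ) :
    run c (codeW c j) (some (n, ([] : List Bool))) = some (n + j, []) := by
  have hne : c j ≠ [] := hok.ne j hj
  have : run c (codeW c j) (some (n, ([] : List Bool)))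
      = run c (pairsL (c j)) (some (n, [true, true])) := by
    simp only [codeW, run_cons, step_T_empty c hok hj, step_T_T c hok hj]
  rw [this]
  have := run_pairs c hok hj (c j) [] (by simp) hne n
  simpa using this

lemma step_after_reset_T (hok : CodeOK c) {j : ℕ} (hj : 1 ≤ j) (n : ℕ) :
    step c true (some (n, ([] : List Bool))) = some (n, [true]) := step_T_empty c hok hj n

lemma step_TF_dead (n : ℕ) : step c false (some (n, [true])) = none := by
  apply step_dead
  · rintro ⟨m, -, h⟩
    simp only [codeW, List.cons_append, List.nil_append, List.cons.injEq] at h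
    exact Bool.noConfusion h.2.1
  · rintro ⟨m, -, t, h⟩
    simp only [codeW, List.cons_append, List.nil_append, List.cons_append,
      List.cons.injEq] at h
    exact Bool.noConfusion h.2.1

lemma run_code_garbage (hok : CodeOK c) {j : ℕ} (hj : 1 ≤ j) (n : ℕ)
    (b0 : Bool) (p0 : List Bool) :
    run c (codeW c j) (some (n, b0 :: p0)) = none := by
  obtain ⟨b1, d1, hcj⟩ : ∃ b1 d1, c j = b1 :: d1 := by
    rcases h : c j with _ | ⟨b1, d1⟩
    · exact absurd h (hok.ne j hj)
    · exact ⟨b1, d1, rfl⟩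
  have hcode : codeW c j = true :: true :: false :: (b1 :: pairsL d1) := by
    simp [codeW, hcj]
  set q : List Bool := b0 :: p0 with hq
  have hqne : q ≠ [] := by simp [hq]
  -- analyse the first step
  by_cases h1 : ∃ j', 1 ≤ j' ∧ q ++ [true] = codeW c j'
  · -- the first letter completes a code: reset, then die on [true, false]
    have hstep1 : step c true (some (n, q)) = some (n + h1.choose, []) := by
      simp only [step, dif_pos h1]
    rw [hcode]
    simp only [run_cons, hstep1, step_T_empty c hok hj, step_TF_dead, run_none]
  · by_cases h2 : ∃ m, 1 ≤ m ∧ (q ++ [true]) <+: codeW c m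
    · have hstep1 : step c true (some (n, q)) = some (n, q ++ [true]) :=
        step_prefix c true n q h1 h2
      have hstep2 : step c true (some (n, q ++ [true])) = none := by
        apply step_dead
        · rintro ⟨m, hm, h⟩
          rw [show (q ++ [true]) ++ [true] = q ++ true :: true :: [] by simp] at h
          exact hqne (no_TT c hok hm q [] h)
        · rintro ⟨m, hm, t, h⟩
          rw [show ((q ++ [true]) ++ [true]) ++ t = q ++ true :: true :: t by simp] at h
          exact hqne (no_TT c hok hm q t h)
      rw [hcode]
      simp only [run_cons, hstep1, hstep2, step_none, run_none]
    · have hstep1 : step c true (some (n, q)) = none := step_dead c true n q h1 h2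
      rw [hcode]
      simp only [run_cons, hstep1, step_none, run_none]

lemma mmOf_code (hok : CodeOK c) {j : ℕ} (hj : 1 ≤ j) :
    mmOf c (codeW c j) = sig j := by
  funext s
  rcases s with _ | ⟨n, _ | ⟨b0, p0⟩⟩
  · simp [mmOf, sig]
  · simpa [mmOf, sig] using run_code_clean c hok hj n
  · simpa [mmOf, sig] using run_code_garbage c hok hj n b0 p0

/-- decomposition: any word driving the machine from the initial state to a live state
is a concatenation of code words followed by the pending. -/
lemma run_decomp (hok : CodeOK c) :
    ∀ (w : List Bool) (n : ℕ) (p : List Bool),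
      run c w (some (0, ([] : List Bool))) = some (n, p) →
      ∃ js : List ℕ, (∀ j ∈ js, 1 ≤ j) ∧ js.sum = n ∧
        (js.map (codeW c)).flatten ++ p = w := by
  intro w
  induction w using List.reverseRecOn with
  | nil =>
    intro n p h
    simp only [run_nil, Option.some.injEq, Prod.mk.injEq] at h
    exact ⟨[], by simp, by simp [← h.1], by simp [← h.2]⟩
  | append_singleton w x ih =>
    intro n p h
    rw [run_append] at h
    rcases hw : run c w (some (0, ([] : List Bool))) with _ | ⟨n₁, p₁⟩
    · rw [hw] at h; simp at h
    · rw [hw] at h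
      obtain ⟨js, hjs, hsum, hjoin⟩ := ih n₁ p₁ hw
      simp only [run_cons, run_nil] at h
      by_cases h1 : ∃ j', 1 ≤ j' ∧ p₁ ++ [x] = codeW c j'
      · rw [show step c x (some (n₁, p₁)) = some (n₁ + h1.choose, []) by
          simp only [step, dif_pos h1]] at h
        obtain ⟨hn, hp⟩ : n₁ + h1.choose = n ∧ ([] : List Bool) = p := by
          simpa using h
        refine ⟨js ++ [h1.choose], ?_, ?_, ?_⟩
        · intro j hj
          rcases List.mem_append.mp hj with hj | hj
          · exact hjs j hj
          · simp only [List.mem_singleton] at hj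
            exact hj ▸ h1.choose_spec.1
        · simp [hsum, hn]
        · rw [← hp]
          simp only [List.map_append, List.map_cons, List.map_nil,
            List.flatten_append, List.flatten_cons, List.flatten_nil]
          rw [← h1.choose_spec.2, ← hjoin]
          simp
      · by_cases h2 : ∃ m, 1 ≤ m ∧ (p₁ ++ [x]) <+: codeW c m
        · rw [step_prefix c x n₁ p₁ h1 h2] at h
          obtain ⟨hn, hp⟩ : n₁ = n ∧ p₁ ++ [x] = p := by simpa using h
          exact ⟨js, hjs, hsum.trans (by rw [hn]), by rw [← hp, ← hjoin]; simp⟩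
        · rw [step_dead c x n₁ p₁ h1 h2] at h
          simp at h

noncomputable def stepM (b : Bool) : MM := step c b

lemma mmOf_cons (b : Bool) (w : List Bool) :
    mmOf c (b :: w) = stepM c b * mmOf c w := rfl

def gens : Set MM := {stepM c true, stepM c false}

noncomputable def Hsub : Subsemigroup MM := Subsemigroup.closure (gens c)

lemma stepM_mem (b : Bool) : stepM c b ∈ Hsub c := by
  apply Subsemigroup.subset_closure
  cases b
  · exact Or.inr rfl
  · exact Or.inl rfl

lemma mmOf_mem : ∀ (w : List Bool) (b : Bool), mmOf c (b :: w) ∈ Hsub c := by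
  intro w
  induction w with
  | nil => intro b; exact stepM_mem c b
  | cons b' w ih =>
    intro b
    rw [mmOf_cons]
    exact mul_mem (stepM_mem c b) (ih b')

noncomputable def gstep (b : Bool) : ↥(Hsub c) := ⟨stepM c b, stepM_mem c b⟩

lemma foldl_stepM : ∀ (w : List Bool) (f : MM),
    (w.map (stepM c)).foldl (· * ·) f = f * mmOf c w := by
  intro w
  induction w with
  | nil => intro f; funext s; rfl
  | cons b w ih =>
    intro f
    simp only [List.map_cons, List.foldl_cons, ih, mmOf_cons, mul_assoc]

lemma listProd_mmOf (w : List Bool) (b : Bool) :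
    listProd ((b :: w).map (stepM c)) = some (mmOf c (b :: w)) := by
  simp only [List.map_cons, listProd, foldl_stepM, mmOf_cons]

lemma foldl_coe : ∀ (t : List ↥(Hsub c)) (a : ↥(Hsub c)),
    ((t.foldl (· * ·) a : ↥(Hsub c)) : MM) = (t.map Subtype.val).foldl (· * ·) (a : MM) := by
  intro t
  induction t with
  | nil => intro a; rfl
  | cons b t ih => intro a; simp only [List.foldl_cons, List.map_cons, ih]; rfl

lemma listProd_gstep (w : List Bool) (b : Bool) :
    ∃ z : ↥(Hsub c), listProd ((b :: w).map (gstep c)) = some z ∧ (z : MM) = mmOf c (b :: w) := by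
  refine ⟨(w.map (gstep c)).foldl (· * ·) (gstep c b), rfl, ?_⟩
  rw [foldl_coe]
  have : (w.map (gstep c)).map Subtype.val = w.map (stepM c) := by
    rw [List.map_map]; rfl
  rw [this]
  have := listProd_mmOf c w b
  simp only [List.map_cons, listProd, Option.some.injEq] at this
  rw [← this]; rfl

lemma closure_pair_top :
    Subsemigroup.closure ({gstep c true, gstep c false} : Set ↥(Hsub c)) = ⊤ := by
  rw [eq_top_iff]
  rintro ⟨x, hx⟩ -
  refine Subsemigroup.closure_induction
    (p := fun y hy => (⟨y, hy⟩ : ↥(Hsub c)) ∈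
      Subsemigroup.closure ({gstep c true, gstep c false} : Set ↥(Hsub c))) ?_ ?_ hx
  · intro y hy
    apply Subsemigroup.subset_closure
    rcases hy with h | h
    · exact Or.inl (Subtype.ext h)
    · exact Or.inr (Subtype.ext h)
  · intro y z hy hz hy' hz'
    exact mul_mem hy' hz'

noncomputable def idxF (l : ℕ → ℕ) (i : ℕ) : ℕ := {x | (1 ≤ x ∧ l x ≤ l i) ∧ x < i}.ncard

noncomputable def eF (l : ℕ → ℕ) (K i : ℕ) : List Bool :=
  List.ofFn fun t : Fin (K * l i) => (idxF l i).testBit t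

noncomputable def cF (l : ℕ → ℕ) (K i : ℕ) : List Bool :=
  List.replicate (l i) true ++ false :: eF l K i

variable {l : ℕ → ℕ} {K : ℕ}

lemma A_fin (hfin : ∀ r, {i : ℕ | 1 ≤ i ∧ l i ≤ r}.Finite) (i : ℕ) :
    {x | (1 ≤ x ∧ l x ≤ l i) ∧ x < i}.Finite :=
  (hfin (l i)).subset (fun _ hx => hx.1)

lemma idx_lt (hfin : ∀ r, {i : ℕ | 1 ≤ i ∧ l i ≤ r}.Finite)
    (hcard : ∀ r, ({i : ℕ | 1 ≤ i ∧ l i ≤ r}).ncard ≤ 2 ^ (K * r))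
    {i : ℕ} (hi : 1 ≤ i) : idxF l i < 2 ^ (K * l i) := by
  have hnm : i ∉ {x | (1 ≤ x ∧ l x ≤ l i) ∧ x < i} := fun h => lt_irrefl i h.2
  have hins : insert i {x | (1 ≤ x ∧ l x ≤ l i) ∧ x < i} ⊆ {x : ℕ | 1 ≤ x ∧ l x ≤ l i} := by
    rintro x (rfl | hx)
    · exact ⟨hi, le_rfl⟩
    · exact hx.1
  have h1 : idxF l i + 1 = (insert i {x | (1 ≤ x ∧ l x ≤ l i) ∧ x < i}).ncard :=
    (Set.ncard_insert_of_notMem hnm (A_fin hfin i)).symm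
  have h2 : (insert i {x | (1 ≤ x ∧ l x ≤ l i) ∧ x < i}).ncard
      ≤ ({x : ℕ | 1 ≤ x ∧ l x ≤ l i}).ncard :=
    Set.ncard_le_ncard hins (hfin (l i))
  have := hcard (l i)
  omega

lemma idx_mono (hfin : ∀ r, {i : ℕ | 1 ≤ i ∧ l i ≤ r}.Finite)
    {m j : ℕ} (hmj : m < j) (hm : 1 ≤ m) (hl : l m = l j) : idxF l m < idxF l j := by
  have hnm : m ∉ {x | (1 ≤ x ∧ l x ≤ l m) ∧ x < m} := fun h => lt_irrefl m h.2
  have hins : insert m {x | (1 ≤ x ∧ l x ≤ l m) ∧ x < m}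
      ⊆ {x | (1 ≤ x ∧ l x ≤ l j) ∧ x < j} := by
    rintro x (rfl | hx)
    · exact ⟨⟨hm, hl ▸ le_rfl⟩, hmj⟩
    · exact ⟨⟨hx.1.1, hl ▸ hx.1.2⟩, hx.2.trans hmj⟩
  have h1 : idxF l m + 1 = (insert m {x | (1 ≤ x ∧ l x ≤ l m) ∧ x < m}).ncard :=
    (Set.ncard_insert_of_notMem hnm (A_fin hfin m)).symm
  have h2 : (insert m {x | (1 ≤ x ∧ l x ≤ l m) ∧ x < m}).ncard ≤ idxF l j :=
    Set.ncard_le_ncard hins (A_fin hfin j)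
  omega

lemma e_inj (hfin : ∀ r, {i : ℕ | 1 ≤ i ∧ l i ≤ r}.Finite)
    (hcard : ∀ r, ({i : ℕ | 1 ≤ i ∧ l i ≤ r}).ncard ≤ 2 ^ (K * r))
    {m j : ℕ} (hm : 1 ≤ m) (hj : 1 ≤ j) (hl : l m = l j)
    (he : eF l K m = eF l K j) : m = j := by
  have hlen : K * l m = K * l j := by rw [hl]
  have hbit : ∀ t, (idxF l m).testBit t = (idxF l j).testBit t := by
    intro t
    by_cases ht : t < K * l m
    · have h1 : (eF l K m)[t]'(by simpa [eF] using ht) = (idxF l m).testBit t :=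
        List.getElem_ofFn _
      have h2 : (eF l K j)[t]'(by simpa [eF] using (hlen ▸ ht)) = (idxF l j).testBit t :=
        List.getElem_ofFn _
      rw [← h1, ← h2]
      exact List.getElem_of_eq he _
    · have hb1 : (idxF l m).testBit t = false :=
        Nat.testBit_lt_two_pow ((idx_lt hfin hcard hm).trans_le
          (Nat.pow_le_pow_right (by norm_num) (not_lt.mp ht)))
      have hb2 : (idxF l j).testBit t = false :=
        Nat.testBit_lt_two_pow ((idx_lt hfin hcard hj).trans_le
          (Nat.pow_le_pow_right (by norm_num) (hlen ▸ not_lt.mp ht)))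
      rw [hb1, hb2]
  have hidx : idxF l m = idxF l j := Nat.eq_of_testBit_eq hbit
  rcases lt_trichotomy m j with h | h | h
  · exact absurd hidx (idx_mono hfin h hm hl).ne
  · exact h
  · exact absurd hidx.symm (idx_mono hfin h hj hl.symm).ne

lemma replicate_prefix : ∀ (a b : ℕ) (s t : List Bool),
    (List.replicate a true ++ false :: s) <+: (List.replicate b true ++ false :: t) →
    a = b ∧ s <+: t := by
  intro a
  induction a with
  | zero =>
    intro b s t h
    cases b with
    | zero =>
      simp only [List.replicate, List.nil_append, List.cons_prefix_cons] at h
      exact ⟨rfl, h.2⟩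
    | succ b =>
      exfalso
      simp only [List.replicate_succ, List.replicate, List.nil_append,
        List.cons_append, List.cons_prefix_cons] at h
      exact Bool.noConfusion h.1
  | succ a ih =>
    intro b s t h
    cases b with
    | zero =>
      exfalso
      simp only [List.replicate_succ, List.replicate, List.nil_append,
        List.cons_append, List.cons_prefix_cons] at h
      exact Bool.noConfusion h.1
    | succ b =>
      simp only [List.replicate_succ, List.cons_append, List.cons_prefix_cons] at h
      obtain ⟨ha, hst⟩ := ih b s t h.2
      exact ⟨by omega, hst⟩

lemma cF_ne (j : ℕ) : cF l K j ≠ [] := by simp [cF]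

lemma cF_len (j : ℕ) : (cF l K j).length = l j + 1 + K * l j := by
  simp [cF, eF]; omega

lemma cF_pf (hfin : ∀ r, {i : ℕ | 1 ≤ i ∧ l i ≤ r}.Finite)
    (hcard : ∀ r, ({i : ℕ | 1 ≤ i ∧ l i ≤ r}).ncard ≤ 2 ^ (K * r))
    {m j : ℕ} (hm : 1 ≤ m) (hj : 1 ≤ j) (hpre : cF l K m <+: cF l K j) : m = j := by
  obtain ⟨hl, hep⟩ := replicate_prefix (l m) (l j) _ _ hpre
  have hlen : (eF l K m).length = (eF l K j).length := by
    simp [eF, hl]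
  exact e_inj hfin hcard hm hj hl (hep.eq_of_length hlen)

lemma codeOK_cF (hfin : ∀ r, {i : ℕ | 1 ≤ i ∧ l i ≤ r}.Finite)
    (hcard : ∀ r, ({i : ℕ | 1 ≤ i ∧ l i ≤ r}).ncard ≤ 2 ^ (K * r)) :
    CodeOK (cF l K) :=
  ⟨fun j _ => cF_ne j, fun m j hm hj h => cF_pf hfin hcard hm hj h⟩

end S16

/-- for any `l : ℕ → ℕ` satisfying (C1) and (C2), there is a `2`-generated
semigroup `H` and `h ∈ H` with `|h^i|_H ≈ l(i)` (here `pow1 h (i-1) = h^i`). -/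
theorem stmt16 (l : ℕ → ℕ) (hpos : ∀ i, 1 ≤ i → 1 ≤ l i)
    (hC1 : ∀ i j : ℕ, 1 ≤ i → 1 ≤ j → l (i + j) ≤ l i + l j)
    (hC2 : ∃ a : ℝ, 0 < a ∧ ∀ r : ℕ, {i : ℕ | 1 ≤ i ∧ l i ≤ r}.Finite ∧
      (({i : ℕ | 1 ≤ i ∧ l i ≤ r}).ncard : ℝ) ≤ a ^ r) :
    ∃ (H : Type) (iH : Semigroup H) (b₁ b₂ : H) (h : H),
      @Subsemigroup.closure H (@Semigroup.toMul H iH) {b₁, b₂} = ⊤ ∧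
      ∃ c₁ c₂ : ℝ, 0 < c₁ ∧ 0 < c₂ ∧
        ∀ i : ℕ, c₁ * l (i + 1) ≤ (@lenOf H iH {b₁, b₂} (@pow1 H iH h i) : ℝ) ∧
          (@lenOf H iH {b₁, b₂} (@pow1 H iH h i) : ℝ) ≤ c₂ * l (i + 1) := by
  classical
  obtain ⟨a, ha, hC2⟩ := hC2
  have hfin : ∀ r, {i : ℕ | 1 ≤ i ∧ l i ≤ r}.Finite := fun r => (hC2 r).1
  obtain ⟨K, hK⟩ := pow_unbounded_of_one_lt a (one_lt_two (α := ℝ))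
  have hcard : ∀ r, ({i : ℕ | 1 ≤ i ∧ l i ≤ r}).ncard ≤ 2 ^ (K * r) := by
    intro r
    have h1 : (({i : ℕ | 1 ≤ i ∧ l i ≤ r}).ncard : ℝ) ≤ a ^ r := (hC2 r).2
    have h2 : (a : ℝ) ^ r ≤ ((2 : ℝ) ^ K) ^ r := pow_le_pow_left₀ ha.le hK.le r
    have h3 : ((2 : ℝ) ^ K) ^ r = ((2 ^ (K * r) : ℕ) : ℝ) := by
      rw [← pow_mul]; push_cast; ring
    have := h1.trans (h2.trans_eq h3)
    exact_mod_cast this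
  set c : ℕ → List Bool := S16.cF l K with hc
  have hok : S16.CodeOK c := S16.codeOK_cF hfin hcard
  set b₁ : ↥(S16.Hsub c) := S16.gstep c true with hb₁
  set b₂ : ↥(S16.Hsub c) := S16.gstep c false with hb₂
  have hcode1 : S16.codeW c 1 = true :: true :: S16.pairsL (c 1) := rfl
  set h : ↥(S16.Hsub c) := ⟨S16.mmOf c (S16.codeW c 1), by
    rw [hcode1]; exact S16.mmOf_mem c _ true⟩ with hh
  have hcoe : (h : S16.MM) = S16.sig 1 := S16.mmOf_code c hok le_rfl
  have hpow : ∀ i : ℕ, ((pow1 h i : ↥(S16.Hsub c)) : S16.MM) = S16.sig (i + 1) := by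
    intro i
    induction i with
    | zero => exact hcoe
    | succ n ih =>
      have hstep : pow1 h (n + 1) = pow1 h n * h := rfl
      have hmul : ((pow1 h n * h : ↥(S16.Hsub c)) : S16.MM)
          = ((pow1 h n : ↥(S16.Hsub c)) : S16.MM) * (h : S16.MM) := rfl
      rw [hstep, hmul, ih, hcoe, S16.sig_mul]
  -- subadditivity over lists
  have hsubadd : ∀ js : List ℕ, js ≠ [] → (∀ j ∈ js, 1 ≤ j) →
      l js.sum ≤ (js.map l).sum := by
    intro js
    induction js with
    | nil => intro hne _; exact absurd rfl hne
    | cons j t ih =>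
      intro _ hall
      cases t with
      | nil => simp
      | cons t0 t' =>
        have ht1 : 1 ≤ (t0 :: t').sum := by
          have := hall t0 (by simp)
          simp only [List.sum_cons]
          omega
        have hj1 : 1 ≤ j := hall j (by simp)
        have h1 : l (j + (t0 :: t').sum) ≤ l j + l ((t0 :: t').sum) :=
          hC1 j ((t0 :: t').sum) hj1 ht1
        have h2 : l ((t0 :: t').sum) ≤ ((t0 :: t').map l).sum :=
          ih (by simp) (fun x hx => hall x (by simp [hx]))
        simp only [List.sum_cons, List.map_cons] at *
        omega
  refine ⟨↥(S16.Hsub c), inferInstance, b₁, b₂, h, S16.closure_pair_top c,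
    1, ((2 * K + 6 : ℕ) : ℝ), one_pos, by positivity, ?_⟩
  intro i
  have hli : 1 ≤ l (i + 1) := hpos (i + 1) (by omega)
  -- the canonical representing word
  set N : ℕ := (S16.codeW c (i + 1)).length with hN
  have hNval : N = 2 + 2 * (l (i + 1) + 1 + K * l (i + 1)) := by
    rw [hN, S16.codeW_len, hc, S16.cF_len]
  have hrep : RepLen {b₁, b₂} (pow1 h i) N := by
    obtain ⟨z, hz, hzcoe⟩ := S16.listProd_gstep c (true :: S16.pairsL (c (i + 1))) true
    have hzc : (z : S16.MM) = S16.sig (i + 1) := by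
      rw [hzcoe, show (true :: true :: S16.pairsL (c (i + 1))) = S16.codeW c (i + 1) from rfl]
      exact S16.mmOf_code c hok (by omega)
    have hz2 : z = pow1 h i := Subtype.ext (by rw [hzc, ← hpow i])
    refine ⟨(S16.codeW c (i + 1)).map (S16.gstep c), ?_, ?_, by simp [hN]⟩
    · intro x hx
      obtain ⟨bb, -, rfl⟩ := List.mem_map.mp hx
      cases bb
      · exact Or.inr rfl
      · exact Or.inl rfl
    · rw [show S16.codeW c (i + 1) = true :: true :: S16.pairsL (c (i + 1)) from rfl]
      rw [show ((true :: true :: S16.pairsL (c (i + 1))).map (S16.gstep c))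
          = ((true :: S16.pairsL (c (i + 1))).map (S16.gstep c)).cons (S16.gstep c true)
          from rfl] at *
      rw [hz, hz2]
  have hub : lenOf {b₁, b₂} (pow1 h i) ≤ N := Nat.sInf_le hrep
  -- lower bound
  have hmemInf : RepLen {b₁, b₂} (pow1 h i) (lenOf {b₁, b₂} (pow1 h i)) :=
    Nat.sInf_mem (⟨N, hrep⟩ : {n | RepLen {b₁, b₂} (pow1 h i) n}.Nonempty)
  obtain ⟨w, hwB, hwprod, hwlen⟩ := hmemInf
  have extract : ∀ w : List ↥(S16.Hsub c),
      (∀ x ∈ w, x ∈ ({b₁, b₂} : Set ↥(S16.Hsub c))) →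
      ∃ bs : List Bool, w = bs.map (S16.gstep c) := by
    intro w
    induction w with
    | nil => intro _; exact ⟨[], rfl⟩
    | cons x t ih =>
      intro hall
      obtain ⟨bs, hbs⟩ := ih (fun y hy => hall y (by simp [hy]))
      rcases hall x (by simp) with hx | hx
      · exact ⟨true :: bs, by rw [hx, hb₁, List.map_cons, ← hbs]⟩
      · exact ⟨false :: bs, by rw [hx, hb₂, List.map_cons, ← hbs]⟩
  obtain ⟨bs, rfl⟩ := extract w hwB
  have hbsne : bs ≠ [] := by
    rintro rfl
    simp [listProd] at hwprod
  obtain ⟨bb, bs', rfl⟩ : ∃ bb bs', bs = bb :: bs' := by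
    rcases bs with _ | ⟨bb, bs'⟩
    · exact absurd rfl hbsne
    · exact ⟨bb, bs', rfl⟩
  obtain ⟨z, hz, hzcoe⟩ := S16.listProd_gstep c bs' bb
  have hzeq : z = pow1 h i := by
    rw [hz] at hwprod
    exact Option.some.inj hwprod
  have hmm : S16.mmOf c (bb :: bs') = S16.sig (i + 1) := by
    rw [← hzcoe, hzeq, hpow i]
  have hrun : S16.run c (bb :: bs') (some (0, ([] : List Bool))) = some (i + 1, []) := by
    have := congrFun hmm (some (0, ([] : List Bool)))
    simpa [S16.mmOf, S16.sig] using this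
  obtain ⟨js, hjs1, hjsum, hjoin⟩ := S16.run_decomp c hok (bb :: bs') (i + 1) [] hrun
  have hjsne : js ≠ [] := by
    rintro rfl
    simp at hjsum
  have hlen1 : (bb :: bs').length = (js.map (fun j => (S16.codeW c j).length)).sum := by
    rw [← hjoin]
    simp [List.length_flatten, List.map_map]
    rfl
  have hterm : ∀ j ∈ js, l j ≤ (S16.codeW c j).length := by
    intro j _
    rw [S16.codeW_len, hc, S16.cF_len]
    omega
  have hsum2 : (js.map l).sum ≤ (js.map (fun j => (S16.codeW c j).length)).sum :=
    List.sum_le_sum (fun j hj => hterm j hj)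
  have hlower : l (i + 1) ≤ (bb :: bs').length := by
    have h1 : l (i + 1) ≤ (js.map l).sum := by
      rw [← hjsum]
      exact hsubadd js hjsne hjs1
    omega
  have hlenw : ((bb :: bs').map (S16.gstep c)).length = (bb :: bs').length := by simp
  have hlow : l (i + 1) ≤ lenOf {b₁, b₂} (pow1 h i) := by
    rw [← hwlen, hlenw]
    exact hlower
  have hubN : lenOf {b₁, b₂} (pow1 h i) ≤ (2 * K + 6) * l (i + 1) := by
    have : N ≤ (2 * K + 6) * l (i + 1) := by
      rw [hNval]
      nlinarith
    omega
  constructor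
  · rw [one_mul]
    exact_mod_cast hlow
  · have hc2 : (lenOf {b₁, b₂} (pow1 h i) : ℝ) ≤ (((2 * K + 6) * l (i + 1) : ℕ) : ℝ) :=
      Nat.cast_le.mpr hubN
    push_cast at hc2 ⊢
    linarith
end

section
/- Let H be a semigroup with finite generating set B embedded into a semigroup R with finite generating set T via Murskii's embedding (so that every word W over T equal in R to a word P over B decomposes as W ≡ P₀U₁P₁⋯U_lP_l with the P_i words over B, each U_i containing after deletions a subword of the same length as a word R_i over B, and P₀R₁P₁⋯R_lP_l = P in H). Then |P|_B ≤ |P|_T ; i.e., the embedding of H into R is undistorted. -/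
private lemma foldl_mul_eq {M : Type*} [Semigroup M] (l : List M) (a b : M) :
    l.foldl (· * ·) (a * b) = a * l.foldl (· * ·) b := by
  induction l generalizing b with
  | nil => rfl
  | cons c t ih => simp only [List.foldl_cons, mul_assoc, ih]

private lemma listProd_append {M : Type*} [Semigroup M] {l₁ l₂ : List M} {x y : M}
    (h₁ : listProd l₁ = some x) (h₂ : listProd l₂ = some y) :
    listProd (l₁ ++ l₂) = some (x * y) := by
  cases l₁ with
  | nil => simp [listProd] at h₁
  | cons a t =>
    cases l₂ with
    | nil => simp [listProd] at h₂
    | cons b s =>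
      simp only [listProd, Option.some.injEq] at h₁ h₂
      subst h₁ h₂
      show some ((t ++ b :: s).foldl (· * ·) a) = _
      rw [List.foldl_append, List.foldl_cons, foldl_mul_eq]

private lemma listProd_map {M N : Type*} [Semigroup M] [Semigroup N] (φ : M →ₙ* N)
    (l : List M) : listProd (l.map φ) = (listProd l).map φ := by
  cases l with
  | nil => rfl
  | cons a t =>
    simp only [listProd, List.map_cons, Option.map_some]
    congr 1
    induction t generalizing a with
    | nil => rfl
    | cons b s ih => simp only [List.map_cons, List.foldl_cons, ← map_mul, ih]

private lemma exists_rep {M : Type*} [Semigroup M] {T : Set M} {x : M}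
    (hx : x ∈ Subsemigroup.closure T) :
    ∃ w : List M, (∀ y ∈ w, y ∈ T) ∧ listProd w = some x := by
  induction hx using Subsemigroup.closure_induction with
  | mem y hy => exact ⟨[y], by simpa using hy, rfl⟩
  | mul a b _ _ iha ihb =>
    obtain ⟨w₁, hw₁, hp₁⟩ := iha
    obtain ⟨w₂, hw₂, hp₂⟩ := ihb
    exact ⟨w₁ ++ w₂, fun y hy => (List.mem_append.1 hy).elim (hw₁ y) (hw₂ y),
      listProd_append hp₁ hp₂⟩

private lemma exists_preimage_list {M N : Type*} (φ : M → N) (B : Set M) :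
    ∀ V : List N, (∀ x ∈ V, x ∈ φ '' B) →
      ∃ w : List M, (∀ x ∈ w, x ∈ B) ∧ w.map φ = V := by
  intro V
  induction V with
  | nil => exact fun _ => ⟨[], by simp, rfl⟩
  | cons a t ih =>
    intro h
    obtain ⟨b, hb, rfl⟩ := h a List.mem_cons_self
    obtain ⟨w, hw, hmap⟩ := ih fun x hx => h x (List.mem_cons_of_mem _ hx)
    refine ⟨b :: w, ?_, by simp [hmap]⟩
    intro x hx
    rcases List.mem_cons.1 hx with rfl | hx
    · exact hb
    · exact hw x hx

/-- Murskii's embedding is undistorted.  `H` (generated by `B`) embeds in `R`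
(generated by `T`) via `φ`, and the hypothesis `murskii` is the structural decomposition of
Murskii's Lemma 3.3: every word `W` over `T` equal in `R` to (the image of) a word over `B`
representing `P ∈ H` decomposes as `W ≡ P₀U₁P₁⋯U_lP_l` with the `P_i` words over (the image
of) `B`, and there are words `R_i` over (the image of) `B`, with `‖R_i‖ ≤ ‖U_i‖`, such that
`P₀R₁P₁⋯R_lP_l` is equal to `P` in `H`.  Then `|P|_B ≤ |P|_T`. -/
theorem stmt19 {H R : Type*} [Semigroup H] [Semigroup R]
    (B : Set H) (T : Set R) (hBfin : B.Finite) (hTfin : T.Finite)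
    (hBgen : Subsemigroup.closure B = ⊤) (hTgen : Subsemigroup.closure T = ⊤)
    (φ : H →ₙ* R) (hφ : Function.Injective φ)
    (murskii : ∀ (P : H) (W : List R), (∀ x ∈ W, x ∈ T) → listProd W = some (φ P) →
      ∃ (P₀ : List R) (trip : List (List R × List R × List R)),
        (∀ x ∈ P₀, x ∈ φ '' B) ∧
        (∀ t ∈ trip,
          (∀ x ∈ t.1, x ∈ T) ∧ (∀ x ∈ t.2.1, x ∈ φ '' B) ∧ (∀ x ∈ t.2.2, x ∈ φ '' B) ∧
          t.2.1.length ≤ t.1.length) ∧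
        W = P₀ ++ (trip.map fun t => t.1 ++ t.2.2).flatten ∧
        listProd (P₀ ++ (trip.map fun t => t.2.1 ++ t.2.2).flatten) = some (φ P)) :
    ∀ P : H, lenOf B P ≤ lenOf T (φ P) := by
  intro P
  -- there exists some word over T representing φ P
  have hne : {n | RepLen T (φ P) n}.Nonempty := by
    have hx : φ P ∈ Subsemigroup.closure T := by rw [hTgen]; trivial
    obtain ⟨w, hw, hp⟩ := exists_rep hx
    exact ⟨w.length, w, hw, hp, rfl⟩
  obtain ⟨W, hWT, hWprod, hWlen⟩ := Nat.sInf_mem hne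
  obtain ⟨P₀, trip, hP₀, htrip, hWdecomp, hVprod⟩ := murskii P W hWT hWprod
  set V : List R := P₀ ++ (trip.map fun t => t.2.1 ++ t.2.2).flatten with hV
  -- V is a word over φ '' B
  have hVB : ∀ x ∈ V, x ∈ φ '' B := by
    intro x hx
    rcases List.mem_append.1 hx with h | h
    · exact hP₀ x h
    · obtain ⟨l, hl, hxl⟩ := List.mem_flatten.1 h
      obtain ⟨t, ht, rfl⟩ := List.mem_map.1 hl
      rcases List.mem_append.1 hxl with h' | h'
      · exact (htrip t ht).2.1 x h'
      · exact (htrip t ht).2.2.1 x h'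
  -- length bound
  have hlen : V.length ≤ W.length := by
    rw [hWdecomp, hV]
    simp only [List.length_append, List.length_flatten, List.map_map]
    refine Nat.add_le_add_left (List.sum_le_sum fun t ht => ?_) _
    simp only [Function.comp_apply, List.length_append]
    exact Nat.add_le_add_right ((htrip t ht).2.2.2) _
  -- pull back V to a word over B
  obtain ⟨w, hwB, hwmap⟩ := exists_preimage_list φ B V hVB
  have hwprod : listProd w = some P := by
    have := listProd_map φ w
    rw [hwmap, hVprod] at this
    obtain ⟨q, hq, hq'⟩ := Option.map_eq_some_iff.1 this.symm
    rw [hq, hφ hq']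
  have hmem : w.length ∈ {n | RepLen B P n} := ⟨w, hwB, hwprod, rfl⟩
  calc lenOf B P ≤ w.length := Nat.sInf_le hmem
    _ = V.length := by rw [← hwmap, List.length_map]
    _ ≤ W.length := hlen
    _ = lenOf T (φ P) := hWlen
end
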